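/- arXiv:2006.07730 — 6 statements merged into one kernel-verified Lean document; each statement's English description precedes it below -/
import Mathlib

section
/- Let K : [0,1]² → ℝ be C^{2,2} (i.e., all partial derivatives ∂_x^i ∂_y^j K with i, j ≤ 2 exist and are continuous). Suppose sup |K| ≤ d^{-γ} and all the partial derivatives ∂_x^i ∂_y^j K with i, j ≤ 2 are bounded in absolute value by 1, where d ≥ 1 and γ > 0. Then there is a constant C (depending only on γ) such that |∂_x K(x,y)| ≤ C d^{-γ/2} and |∂_x ∂_y K(x,y)| ≤ C d^{-γ/4} for all (x,y) ∈ [0,1]². -/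
open Set

/-- Mixed partial derivative `∂_y^j ∂_x^i K` of a kernel `K : ℝ → ℝ → ℝ`. -/
noncomputable def mixedPartial (K : ℝ → ℝ → ℝ) (i j : ℕ) (x y : ℝ) : ℝ :=
  iteratedDeriv j (fun y' => iteratedDeriv i (fun x' => K x' y') x) y

/-- Landau-type inequality on [0,1]. -/
lemma landau_aux (f : ℝ → ℝ) (hf : ContDiff ℝ 2 f) (M0 M2 h : ℝ)
    (h0 : 0 < h) (h1 : h ≤ 1)
    (hM0 : ∀ t ∈ Icc (0:ℝ) 1, |f t| ≤ M0)
    (hM2 : ∀ t ∈ Icc (0:ℝ) 1, |deriv (deriv f) t| ≤ M2)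
    (x : ℝ) (hx : x ∈ Icc (0:ℝ) 1) :
    |deriv f x| ≤ 2 * M0 / h + h * M2 := by
  set a := min x (1 - h) with ha
  have hab : a < a + h := by linarith
  have ha0 : 0 ≤ a := le_min hx.1 (by linarith)
  have hb1 : a + h ≤ 1 := by
    rcases min_cases x (1 - h) with ⟨h', _⟩ | ⟨h', _⟩ <;> rw [ha, h'] <;> linarith [hx.2]
  have hxab : x ∈ Icc a (a + h) := by
    constructor
    · exact min_le_left _ _
    · rcases le_total x (1 - h) with h' | h'
      · have : a = x := min_eq_left h'
        linarith
      · have : a = 1 - h := min_eq_right h'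
        linarith [hx.2]
  have hdiff : Differentiable ℝ f := hf.differentiable (by norm_num)
  have hdiff' : Differentiable ℝ (deriv f) := by
    have h2 : ContDiff ℝ ((1:ℕ) + 1) f := by
      convert hf using 2
      norm_num
    exact (contDiff_succ_iff_deriv.mp h2).2.2.differentiable (by norm_num)
  obtain ⟨ξ, hξ, hslope⟩ := exists_deriv_eq_slope f hab hf.continuous.continuousOn
    hdiff.differentiableOn
  have hξ01 : ξ ∈ Icc (0:ℝ) 1 := ⟨le_trans ha0 hξ.1.le, le_trans hξ.2.le hb1⟩
  have hsub : Icc a (a + h) ⊆ Icc (0:ℝ) 1 := Icc_subset_Icc ha0 hb1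
  have hMa := hM0 a (hsub ⟨le_refl a, by linarith⟩)
  have hMb := hM0 (a + h) (hsub ⟨by linarith, le_refl _⟩)
  have hξbound : |deriv f ξ| ≤ 2 * M0 / h := by
    rw [hslope]
    have : a + h - a = h := by ring
    rw [this, abs_div, abs_of_pos h0]
    gcongr
    calc |f (a + h) - f a| ≤ |f (a+h)| + |f a| := abs_sub _ _
      _ ≤ 2 * M0 := by linarith
  have hmvt : |deriv f x - deriv f ξ| ≤ M2 * |x - ξ| := by
    have := Convex.norm_image_sub_le_of_norm_deriv_le
      (f := deriv f) (s := Icc (0:ℝ) 1)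
      (fun t _ => (hdiff' t))
      (fun t ht => hM2 t ht) (convex_Icc 0 1) hξ01 hx
    simpa [Real.norm_eq_abs] using this
  have hxξ : |x - ξ| ≤ h := by
    rw [abs_sub_le_iff]
    constructor <;> [skip; skip] <;>
      · have h1' := hxab.1; have h2' := hxab.2
        have h3' := hξ.1.le; have h4' := hξ.2.le
        linarith
  have hM2nn : 0 ≤ M2 := le_trans (abs_nonneg _) (hM2 x hx)
  have key : deriv f x = deriv f ξ + (deriv f x - deriv f ξ) := by ring
  calc |deriv f x| ≤ |deriv f ξ| + |deriv f x - deriv f ξ| := by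
        rw [key]; exact (abs_add_le _ _).trans (by rw [← key])
    _ ≤ 2 * M0 / h + M2 * |x - ξ| := add_le_add hξbound hmvt
    _ ≤ 2 * M0 / h + h * M2 := by nlinarith [abs_nonneg (x - ξ)]

/-- Correlation-decay transfer: if `K` is `C^{2,2}` on `[0,1]²`, `|K| ≤ d^{-γ}` and
all partials `∂_x^i ∂_y^j K`, `i, j ≤ 2`, are bounded by `1`, then
`|∂_x K| ≤ C d^{-γ/2}` and `|∂_x ∂_y K| ≤ C d^{-γ/4}` on `[0,1]²`, where `C = C(γ)`. -/
theorem correlation_decay_transfer (γ : ℝ) (hγ : 0 < γ) :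
    ∃ C : ℝ, 0 < C ∧
      ∀ (K : ℝ → ℝ → ℝ) (d : ℝ), 1 ≤ d →
        (∀ y : ℝ, ContDiff ℝ 2 (fun x => K x y)) →
        (∀ i : ℕ, i ≤ 2 → ∀ x : ℝ,
          ContDiff ℝ 2 (fun y => iteratedDeriv i (fun x' => K x' y) x)) →
        (∀ i j : ℕ, i ≤ 2 → j ≤ 2 → ∀ x ∈ Icc (0:ℝ) 1, ∀ y ∈ Icc (0:ℝ) 1,
          |mixedPartial K i j x y| ≤ 1) →
        (∀ x ∈ Icc (0:ℝ) 1, ∀ y ∈ Icc (0:ℝ) 1, |K x y| ≤ d ^ (-γ)) →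
        ∀ x ∈ Icc (0:ℝ) 1, ∀ y ∈ Icc (0:ℝ) 1,
          |mixedPartial K 1 0 x y| ≤ C * d ^ (-(γ / 2)) ∧
          |mixedPartial K 1 1 x y| ≤ C * d ^ (-(γ / 4)) := by
  refine ⟨7, by norm_num, ?_⟩
  intro K d hd hKx hKy hbdd hK0
  have hd0 : (0:ℝ) < d := lt_of_lt_of_le one_pos hd
  have hple : ∀ e : ℝ, e ≤ 0 → d ^ e ≤ 1 := fun e he =>
    Real.rpow_le_one_of_one_le_of_nonpos hd he
  have hppos : ∀ e : ℝ, (0:ℝ) < d ^ e := fun e => Real.rpow_pos_of_pos hd0 e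
  -- Step 1: bound on ∂ₓK, for all (x,y) in the square.
  have step1 : ∀ x ∈ Icc (0:ℝ) 1, ∀ y ∈ Icc (0:ℝ) 1,
      |deriv (fun x' => K x' y) x| ≤ 3 * d ^ (-(γ/2)) := by
    intro x hx y hy
    have hL := landau_aux (fun x' => K x' y) (hKx y) (d ^ (-γ)) 1 (d ^ (-(γ/2)))
      (hppos _) (hple _ (by linarith))
      (fun t ht => hK0 t ht y hy)
      (fun t ht => by
        have := hbdd 2 0 (by norm_num) (by norm_num) t ht y hy
        have heq : mixedPartial K 2 0 t y = deriv (deriv (fun x' => K x' y)) t := by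
          simp [mixedPartial, iteratedDeriv_succ, iteratedDeriv_zero, iteratedDeriv_one]
        rwa [heq] at this)
      x hx
    have harith : 2 * d ^ (-γ) / d ^ (-(γ/2)) + d ^ (-(γ/2)) * 1 = 3 * d ^ (-(γ/2)) := by
      rw [mul_div_assoc, ← Real.rpow_sub hd0]
      ring_nf
    linarith [hL, harith.symm.le]
  intro x hx y hy
  constructor
  · -- first claim
    have h1 := step1 x hx y hy
    have heq : mixedPartial K 1 0 x y = deriv (fun x' => K x' y) x := by
      simp [mixedPartial, iteratedDeriv_zero, iteratedDeriv_one]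
    rw [heq]
    calc |deriv (fun x' => K x' y) x| ≤ 3 * d ^ (-(γ/2)) := h1
      _ ≤ 7 * d ^ (-(γ/2)) := by nlinarith [hppos (-(γ/2))]
  · -- second claim: apply landau in y to f(y) = ∂ₓK(x,y)
    set f : ℝ → ℝ := fun y' => iteratedDeriv 1 (fun x' => K x' y') x with hfdef
    have hL := landau_aux f (hKy 1 (by norm_num) x) (3 * d ^ (-(γ/2))) 1 (d ^ (-(γ/4)))
      (hppos _) (hple _ (by linarith))
      (fun t ht => by
        have := step1 x hx t ht
        simpa [hfdef, iteratedDeriv_one] using this)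
      (fun t ht => by
        have := hbdd 1 2 (by norm_num) (by norm_num) x hx t ht
        have heq : mixedPartial K 1 2 x t = deriv (deriv f) t := by
          simp [mixedPartial, hfdef, iteratedDeriv_succ, iteratedDeriv_zero, iteratedDeriv_one]
        rwa [heq] at this)
      y hy
    have heq : mixedPartial K 1 1 x y = deriv f y := by
      simp [mixedPartial, hfdef, iteratedDeriv_one]
    rw [heq]
    have harith : 2 * (3 * d ^ (-(γ/2))) / d ^ (-(γ/4)) + d ^ (-(γ/4)) * 1
        = 7 * d ^ (-(γ/4)) := by
      rw [mul_div_assoc, mul_div_assoc, ← Real.rpow_sub hd0]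
      ring_nf
    linarith [hL, harith.symm.le]
end

section
/- Fix 0 < p₀ ≤ 1/2. There exist ε = ε(p₀) > 0 and c = c(p₀) > 0 with the following property. Let η₁, …, η_N be independent random variables on a probability space Ω with η_j ∈ {0,1}, P(η_j = 1) = p_j, and p₀ ≤ p_j ≤ 1 − p₀. Let S_N = ∑_j η_j. Then for any measurable Q : Ω → [0,1] with E[Q] ≥ 1 − ε and any m ∈ ℝ, one has E[(S_N − m)² Q] ≥ c N. -/
open MeasureTheory ProbabilityTheory Set

variable {Ω : Type*} [MeasurableSpace Ω] {μ : Measure Ω} [IsProbabilityMeasure μ]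

lemma integrable_of_ae_bound {f : Ω → ℝ} (hf : Measurable f) (C : ℝ)
    (h : ∀ᵐ ω ∂μ, |f ω| ≤ C) : Integrable f μ := by
  refine (integrable_const C).mono' hf.aestronglyMeasurable ?_
  filter_upwards [h] with ω hω
  simpa [Real.norm_eq_abs] using hω

lemma integrable_pow_mul_pow {f g : Ω → ℝ} {C D : ℝ} (hf : Measurable f) (hg : Measurable g)
    (hbf : ∀ᵐ ω ∂μ, |f ω| ≤ C) (hbg : ∀ᵐ ω ∂μ, |g ω| ≤ D) (k l : ℕ) :
    Integrable (fun ω => (f ω) ^ k * (g ω) ^ l) μ := by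
  refine integrable_of_ae_bound ((hf.pow_const k).mul (hg.pow_const l)) (C ^ k * D ^ l) ?_
  filter_upwards [hbf, hbg] with ω h1 h2
  have h1' : |f ω| ^ k ≤ C ^ k := pow_le_pow_left₀ (abs_nonneg _) h1 k
  have h2' : |g ω| ^ l ≤ D ^ l := pow_le_pow_left₀ (abs_nonneg _) h2 l
  calc |f ω ^ k * g ω ^ l| = |f ω| ^ k * |g ω| ^ l := by rw [abs_mul, abs_pow, abs_pow]
    _ ≤ C ^ k * D ^ l := by
        apply mul_le_mul h1' h2' (by positivity)
        exact le_trans (by positivity) h1'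

lemma integrable_pow_of_ae_bound {f : Ω → ℝ} {C : ℝ} (hf : Measurable f)
    (hbf : ∀ᵐ ω ∂μ, |f ω| ≤ C) (k : ℕ) :
    Integrable (fun ω => (f ω) ^ k) μ := by
  have := integrable_pow_mul_pow (μ := μ) hf measurable_const hbf
    (ae_of_all μ fun ω => by norm_num : ∀ᵐ ω ∂μ, |(1:ℝ)| ≤ 1) k 0
  simpa using this

lemma integral_bernoulli_law {η : Ω → ℝ} (hη : Measurable η) {p : ℝ} (hp0 : 0 ≤ p) (hp1 : p ≤ 1)
    (hmap : μ.map η =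
      ENNReal.ofReal p • Measure.dirac (1 : ℝ) + ENNReal.ofReal (1 - p) • Measure.dirac (0 : ℝ))
    (f : ℝ → ℝ) (hf : Measurable f) :
    ∫ ω, f (η ω) ∂μ = p * f 1 + (1 - p) * f 0 := by
  have hdint : ∀ (c x : ℝ), Integrable f (ENNReal.ofReal c • Measure.dirac x) := by
    intro c x
    have h1 : Integrable f (Measure.dirac x) := by
      refine (integrable_const |f x|).mono' hf.aestronglyMeasurable ?_
      simp [ae_dirac_eq, Real.norm_eq_abs]
    rcases eq_or_ne (ENNReal.ofReal c) 0 with h | h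
    · simp [h]
    · exact (integrable_smul_measure h ENNReal.ofReal_ne_top).2 h1
  rw [← integral_map hη.aemeasurable hf.aestronglyMeasurable, hmap,
    integral_add_measure (hdint _ _) (hdint _ _), integral_smul_measure, integral_smul_measure,
    integral_dirac, integral_dirac, ENNReal.toReal_ofReal hp0,
    ENNReal.toReal_ofReal (by linarith), smul_eq_mul, smul_eq_mul]

lemma bernoulli_ae_01 {η : Ω → ℝ} (hη : Measurable η) {p : ℝ}
    (hmap : μ.map η =
      ENNReal.ofReal p • Measure.dirac (1 : ℝ) + ENNReal.ofReal (1 - p) • Measure.dirac (0 : ℝ)) :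
    ∀ᵐ ω ∂μ, η ω = 0 ∨ η ω = 1 := by
  have hs : MeasurableSet ({0, 1} : Set ℝ) :=
    (measurableSet_singleton 0).union (measurableSet_singleton 1)
  have h1 : μ (η ⁻¹' ({0, 1} : Set ℝ)ᶜ) = 0 := by
    rw [← Measure.map_apply hη hs.compl, hmap]
    have d1 : (Measure.dirac (1 : ℝ)) ({0, 1} : Set ℝ)ᶜ = 0 := by
      rw [Measure.dirac_apply' _ hs.compl]
      simp
    have d0 : (Measure.dirac (0 : ℝ)) ({0, 1} : Set ℝ)ᶜ = 0 := by
      rw [Measure.dirac_apply' _ hs.compl]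
      simp
    simp [Measure.add_apply, Measure.smul_apply, d1, d0]
  have hset : {ω | ¬(η ω = 0 ∨ η ω = 1)} = η ⁻¹' ({0, 1} : Set ℝ)ᶜ := by
    ext ω; simp [not_or]
  rw [ae_iff, hset]
  exact h1

lemma pow_four_add_le (a b : ℝ) : (a + b) ^ 4 ≤ 8 * a ^ 4 + 8 * b ^ 4 := by
  nlinarith [sq_nonneg (a - b), sq_nonneg (a + b), sq_nonneg (a ^ 2 - b ^ 2),
    sq_nonneg (a ^ 2 + b ^ 2), sq_nonneg (a * b)]

lemma min_weight_ineq {x t q : ℝ} (hxt : x ≤ t) (h1 : q ≤ 1) :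
    x - t * (1 - q) ≤ x * q := by
  nlinarith [mul_nonneg (sub_nonneg.2 hxt) (sub_nonneg.2 h1)]

lemma sub_div_le_min (x t : ℝ) (ht : 0 < t) : x ^ 2 - x ^ 4 / (4 * t) ≤ min (x ^ 2) t := by
  rcases le_total (x ^ 2) t with h | h
  · rw [min_eq_left h]
    have h' : 0 ≤ x ^ 4 / (4 * t) := by positivity
    linarith
  · rw [min_eq_right h, sub_le_iff_le_add, ← sub_le_iff_le_add', le_div_iff₀ (by linarith)]
    nlinarith [sq_nonneg (x ^ 2 - 2 * t)]

lemma moments_sum {N : ℕ} {X : Fin N → Ω → ℝ} {v : Fin N → ℝ}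
    (hX : ∀ j, Measurable (X j))
    (hind : iIndepFun X μ)
    (hb : ∀ j, ∀ᵐ ω ∂μ, |X j ω| ≤ 1)
    (h0 : ∀ j, ∫ ω, X j ω ∂μ = 0)
    (h2 : ∀ j, ∫ ω, (X j ω) ^ 2 ∂μ = v j)
    (h4 : ∀ j, ∫ ω, (X j ω) ^ 4 ∂μ ≤ v j)
    (s : Finset (Fin N)) :
    (∫ ω, (∑ j ∈ s, X j ω) ∂μ = 0) ∧
    (∫ ω, (∑ j ∈ s, X j ω) ^ 2 ∂μ = ∑ j ∈ s, v j) ∧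
    (∫ ω, (∑ j ∈ s, X j ω) ^ 4 ∂μ ≤ 3 * (∑ j ∈ s, v j) ^ 2 + ∑ j ∈ s, v j) := by
  induction s using Finset.induction_on with
  | empty => simp
  | @insert a s ha ih =>
    obtain ⟨ihE1, ihE2, ihE4⟩ := ih
    set T : Ω → ℝ := fun ω => ∑ j ∈ s, X j ω with hTdef
    have hTm : Measurable T := Finset.measurable_sum s fun j _ => hX j
    have hbT : ∀ᵐ ω ∂μ, |T ω| ≤ (s.card : ℝ) := by
      filter_upwards [ae_all_iff.2 hb] with ω hω
      calc |T ω| ≤ ∑ j ∈ s, |X j ω| := Finset.abs_sum_le_sum_abs _ _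
        _ ≤ ∑ _j ∈ s, (1:ℝ) := Finset.sum_le_sum fun j _ => hω j
        _ = s.card := by simp
    have hsum : ∀ ω, ∑ j ∈ insert a s, X j ω = X a ω + T ω := fun ω => by
      rw [Finset.sum_insert ha, hTdef]
    have hTX : IndepFun T (X a) μ := by
      have h := hind.indepFun_finsetSum_of_notMem hX ha
      have he : (∑ j ∈ s, X j) = T := by funext ω; simp [hTdef]
      rwa [he] at h
    have intT : ∀ k, Integrable (fun ω => (T ω) ^ k) μ :=
      fun k => integrable_pow_of_ae_bound hTm hbT k
    have intX : ∀ l, Integrable (fun ω => (X a ω) ^ l) μ :=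
      fun l => integrable_pow_of_ae_bound (hX a) (hb a) l
    have intTX : ∀ k l, Integrable (fun ω => (T ω) ^ k * (X a ω) ^ l) μ :=
      fun k l => integrable_pow_mul_pow hTm (hX a) hbT (hb a) k l
    have hIkl : ∀ k l : ℕ, ∫ ω, (T ω) ^ k * (X a ω) ^ l ∂μ
        = (∫ ω, (T ω) ^ k ∂μ) * (∫ ω, (X a ω) ^ l ∂μ) := by
      intro k l
      have h1 : IndepFun (fun ω => (T ω) ^ k) (fun ω => (X a ω) ^ l) μ :=
        hTX.comp (measurable_id.pow_const k) (measurable_id.pow_const l)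
      exact h1.integral_fun_mul_eq_mul_integral (intT k).aestronglyMeasurable (intX l).aestronglyMeasurable
    have intX1 : Integrable (X a) μ := by simpa using intX 1
    have intT1 : Integrable T μ := by simpa using intT 1
    have intTX11 : Integrable (fun ω => T ω * X a ω) μ := by simpa using intTX 1 1
    have intTX31 : Integrable (fun ω => (T ω) ^ 3 * X a ω) μ := by simpa using intTX 3 1
    have intTX13 : Integrable (fun ω => T ω * (X a ω) ^ 3) μ := by simpa using intTX 1 3
    have intTX22 : Integrable (fun ω => (T ω) ^ 2 * (X a ω) ^ 2) μ := intTX 2 2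
    have i11 : ∫ ω, T ω * X a ω ∂μ = 0 := by
      have := hIkl 1 1; simp only [pow_one] at this; rw [this, h0 a, mul_zero]
    have i31 : ∫ ω, (T ω) ^ 3 * X a ω ∂μ = 0 := by
      have := hIkl 3 1; simp only [pow_one] at this; rw [this, h0 a, mul_zero]
    have i13 : ∫ ω, T ω * (X a ω) ^ 3 ∂μ = 0 := by
      have := hIkl 1 3; simp only [pow_one] at this
      rw [this, ihE1, zero_mul]
    have vA : 0 ≤ v a := by
      rw [← h2 a]; exact integral_nonneg fun ω => sq_nonneg _
    have V0 : 0 ≤ ∑ j ∈ s, v j := by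
      rw [← ihE2]; exact integral_nonneg fun ω => sq_nonneg _
    refine ⟨?_, ?_, ?_⟩
    · rw [show (fun ω => ∑ j ∈ insert a s, X j ω) = fun ω => X a ω + T ω from
        funext fun ω => hsum ω]
      rw [integral_add intX1 intT1, h0 a, ihE1]
      norm_num
    · rw [Finset.sum_insert ha,
        show (fun ω => (∑ j ∈ insert a s, X j ω) ^ 2)
          = fun ω => (T ω) ^ 2 + (2 * (T ω * X a ω) + (X a ω) ^ 2) from
          funext fun ω => by rw [hsum ω]; ring]
      have I1 : Integrable (fun ω => 2 * (T ω * X a ω) + X a ω ^ 2) μ := by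
        exact (intTX11.const_mul 2).add (intX 2)
      rw [integral_add (intT 2) I1,
        integral_add (intTX11.const_mul 2) (intX 2), integral_const_mul, i11, ihE2, h2 a]
      ring
    · rw [Finset.sum_insert ha,
        show (fun ω => (∑ j ∈ insert a s, X j ω) ^ 4)
          = fun ω => (T ω) ^ 4 + (4 * ((T ω) ^ 3 * X a ω) + (6 * ((T ω) ^ 2 * (X a ω) ^ 2)
              + (4 * (T ω * (X a ω) ^ 3) + (X a ω) ^ 4))) from
          funext fun ω => by rw [hsum ω]; ring]
      have J3 : Integrable (fun ω => 4 * (T ω * X a ω ^ 3) + X a ω ^ 4) μ := by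
        exact (intTX13.const_mul 4).add (intX 4)
      have J2 : Integrable (fun ω => 6 * (T ω ^ 2 * X a ω ^ 2)
          + (4 * (T ω * X a ω ^ 3) + X a ω ^ 4)) μ := by
        exact (intTX22.const_mul 6).add J3
      have J1 : Integrable (fun ω => 4 * (T ω ^ 3 * X a ω) + (6 * (T ω ^ 2 * X a ω ^ 2)
          + (4 * (T ω * X a ω ^ 3) + X a ω ^ 4))) μ := by
        exact (intTX31.const_mul 4).add J2
      rw [integral_add (intT 4) J1,
        integral_add (intTX31.const_mul 4) J2,
        integral_add (intTX22.const_mul 6) J3,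
        integral_add (intTX13.const_mul 4) (intX 4),
        integral_const_mul, integral_const_mul, integral_const_mul, i31, i13, hIkl 2 2, ihE2,
        h2 a]
      nlinarith [ihE4, h4 a, vA, V0, sq_nonneg (v a)]

set_option maxHeartbeats 1000000 in
/-- **Anticoncentration of Bernoulli sums, robust under weights.** Fix `0 < p₀ ≤ 1/2`.
There are `ε = ε(p₀) > 0` and `c = c(p₀) > 0` such that for any independent random
variables `η j ∈ {0,1}` with `P(η j = 1) = p j` and `p₀ ≤ p j ≤ 1 − p₀`, any measurable
`Q : Ω → [0,1]` with `E[Q] ≥ 1 − ε`, and any `m ∈ ℝ`, one has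
`E[(S_N − m)² Q] ≥ c N` where `S_N = ∑ j, η j`. -/
theorem bernoulli_anticoncentration (p₀ : ℝ) (hp₀ : 0 < p₀) (hp₀' : p₀ ≤ 1 / 2) :
    ∃ ε : ℝ, 0 < ε ∧ ∃ c : ℝ, 0 < c ∧
      ∀ (N : ℕ) {Ω : Type} [MeasurableSpace Ω] (μ : Measure Ω) [IsProbabilityMeasure μ]
        (η : Fin N → Ω → ℝ) (p : Fin N → ℝ),
        (∀ j, Measurable (η j)) →
        iIndepFun η μ →
        (∀ j, p₀ ≤ p j ∧ p j ≤ 1 - p₀) →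
        (∀ j, μ.map (η j) =
          ENNReal.ofReal (p j) • Measure.dirac (1 : ℝ) +
            ENNReal.ofReal (1 - p j) • Measure.dirac (0 : ℝ)) →
        ∀ Q : Ω → ℝ, Measurable Q → (∀ ω, Q ω ∈ Icc (0:ℝ) 1) →
          1 - ε ≤ ∫ ω, Q ω ∂μ →
          ∀ m : ℝ, c * N ≤ ∫ ω, ((∑ j, η j ω) - m) ^ 2 * Q ω ∂μ := by
  have h32 : (0:ℝ) < 48 * p₀ + 32 := by linarith
  refine ⟨p₀ / (48 * p₀ + 32), by positivity, p₀ / 8, by positivity, ?_⟩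
  intro N Ω _ μ _ η p hη hind hp hmap Q hQm hQ01 hQE m
  have hQ0 : ∀ ω, 0 ≤ Q ω := fun ω => (hQ01 ω).1
  have hQ1 : ∀ ω, Q ω ≤ 1 := fun ω => (hQ01 ω).2
  rcases Nat.eq_zero_or_pos N with hN | hN
  · have h0' : (p₀ / 8 : ℝ) * N = 0 := by rw [hN]; simp
    rw [h0']
    exact integral_nonneg fun ω => mul_nonneg (sq_nonneg _) (hQ0 ω)
  -- main case
  have hN1 : (1:ℝ) ≤ N := by exact_mod_cast hN
  have hp01 : ∀ j, 0 ≤ p j ∧ p j ≤ 1 := fun j =>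
    ⟨le_trans hp₀.le (hp j).1, by have := (hp j).2; linarith⟩
  have hXm : ∀ j, Measurable (fun ω => η j ω - p j) :=
    fun j => (hη j).sub measurable_const
  have hXind : iIndepFun (fun j => fun ω => η j ω - p j) μ :=
    hind.comp (fun j x => x - p j) (fun j => measurable_id.sub measurable_const)
  have hb : ∀ j, ∀ᵐ ω ∂μ, |η j ω - p j| ≤ 1 := by
    intro j
    filter_upwards [bernoulli_ae_01 (hη j) (hmap j)] with ω hω
    rcases hω with h | h <;> rw [h, abs_le] <;>
      exact ⟨by linarith [(hp01 j).1, (hp01 j).2], by linarith [(hp01 j).1, (hp01 j).2]⟩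
  have h0 : ∀ j, ∫ ω, (η j ω - p j) ∂μ = 0 := by
    intro j
    calc ∫ ω, (η j ω - p j) ∂μ = p j * ((1:ℝ) - p j) + (1 - p j) * ((0:ℝ) - p j) :=
          integral_bernoulli_law (hη j) (hp01 j).1 (hp01 j).2 (hmap j)
            (fun x => x - p j) (measurable_id.sub measurable_const)
      _ = 0 := by ring
  have h2 : ∀ j, ∫ ω, (η j ω - p j) ^ 2 ∂μ = p j * (1 - p j) := by
    intro j
    calc ∫ ω, (η j ω - p j) ^ 2 ∂μ
        = p j * ((1:ℝ) - p j) ^ 2 + (1 - p j) * ((0:ℝ) - p j) ^ 2 :=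
          integral_bernoulli_law (hη j) (hp01 j).1 (hp01 j).2 (hmap j)
            (fun x => (x - p j) ^ 2) ((measurable_id.sub measurable_const).pow_const 2)
      _ = p j * (1 - p j) := by ring
  have h4 : ∀ j, ∫ ω, (η j ω - p j) ^ 4 ∂μ ≤ p j * (1 - p j) := by
    intro j
    calc ∫ ω, (η j ω - p j) ^ 4 ∂μ
        = p j * ((1:ℝ) - p j) ^ 4 + (1 - p j) * ((0:ℝ) - p j) ^ 4 :=
          integral_bernoulli_law (hη j) (hp01 j).1 (hp01 j).2 (hmap j)
            (fun x => (x - p j) ^ 4) ((measurable_id.sub measurable_const).pow_const 4)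
      _ ≤ p j * (1 - p j) := by nlinarith [sq_nonneg (p j * (1 - p j))]
  obtain ⟨hT1, hT2, hT4⟩ := moments_sum hXm hXind hb h0 h2 h4 Finset.univ
  obtain ⟨V, hVdef⟩ : ∃ V : ℝ, V = ∑ j, p j * (1 - p j) := ⟨_, rfl⟩
  obtain ⟨d, hddef⟩ : ∃ d : ℝ, d = (∑ j, p j) - m := ⟨_, rfl⟩
  rw [← hVdef] at hT2 hT4
  -- basic facts about V
  have hVlb : p₀ / 2 * N ≤ V := by
    rw [hVdef]
    calc p₀ / 2 * N = ∑ _j : Fin N, p₀ / 2 := by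
          simp [Finset.sum_const, Finset.card_univ, nsmul_eq_mul]; ring
      _ ≤ ∑ j, p j * (1 - p j) :=
          Finset.sum_le_sum fun j _ => by nlinarith [(hp j).1, (hp j).2]
  have hV0 : 0 < V := lt_of_lt_of_le (by nlinarith) hVlb
  have hVp : p₀ / 2 ≤ V := le_trans (by nlinarith) hVlb
  have hVd0 : 0 < V + d ^ 2 := by nlinarith [sq_nonneg d]
  have hK0 : (0:ℝ) < 24 + 16 / p₀ := by positivity
  obtain ⟨t, htdef⟩ : ∃ t : ℝ, t = (24 + 16 / p₀) * (V + d ^ 2) / 2 := ⟨_, rfl⟩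
  have ht0 : 0 < t := by rw [htdef]; positivity
  have h4t : (0:ℝ) < 4 * t := by linarith
  -- measurability / integrability
  have hTm : Measurable (fun ω => ∑ j, (η j ω - p j)) :=
    Finset.measurable_sum _ fun j _ => (hη j).sub measurable_const
  have hTb : ∀ᵐ ω ∂μ, |∑ j, (η j ω - p j)| ≤ (N : ℝ) := by
    filter_upwards [ae_all_iff.2 hb] with ω hω
    calc |∑ j, (η j ω - p j)| ≤ ∑ j, |η j ω - p j| := Finset.abs_sum_le_sum_abs _ _
      _ ≤ ∑ _j : Fin N, (1:ℝ) := Finset.sum_le_sum fun j _ => hω j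
      _ = N := by simp
  have hYm : Measurable (fun ω => (∑ j, (η j ω - p j)) + d) := hTm.add_const d
  have hYb : ∀ᵐ ω ∂μ, |(∑ j, (η j ω - p j)) + d| ≤ (N : ℝ) + |d| := by
    filter_upwards [hTb] with ω hω
    calc |(∑ j, (η j ω - p j)) + d| ≤ |∑ j, (η j ω - p j)| + |d| := abs_add_le _ _
      _ ≤ (N : ℝ) + |d| := by linarith
  have intQ : Integrable Q μ := integrable_of_ae_bound hQm 1
    (ae_of_all μ fun ω => abs_le.2 ⟨by linarith [hQ0 ω], hQ1 ω⟩)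
  have hQb : ∀ᵐ ω ∂μ, |Q ω| ≤ 1 :=
    ae_of_all μ fun ω => abs_le.2 ⟨by linarith [hQ0 ω], hQ1 ω⟩
  have intT1 : Integrable (fun ω => ∑ j, (η j ω - p j)) μ := by
    simpa using integrable_pow_of_ae_bound hTm hTb 1
  have intT2 : Integrable (fun ω => (∑ j, (η j ω - p j)) ^ 2) μ :=
    integrable_pow_of_ae_bound hTm hTb 2
  have intY2 : Integrable (fun ω => ((∑ j, (η j ω - p j)) + d) ^ 2) μ :=
    integrable_pow_of_ae_bound hYm hYb 2
  have intY4 : Integrable (fun ω => ((∑ j, (η j ω - p j)) + d) ^ 4) μ :=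
    integrable_pow_of_ae_bound hYm hYb 4
  have intY2Q : Integrable (fun ω => ((∑ j, (η j ω - p j)) + d) ^ 2 * Q ω) μ := by
    simpa using integrable_pow_mul_pow hYm hQm hYb hQb 2 1
  have hminm : Measurable (fun ω => min (((∑ j, (η j ω - p j)) + d) ^ 2) t) :=
    (hYm.pow_const 2).min measurable_const
  have hmin0 : ∀ ω, 0 ≤ min (((∑ j, (η j ω - p j)) + d) ^ 2) t :=
    fun ω => le_min (sq_nonneg _) ht0.le
  have hmint : ∀ ω, min (((∑ j, (η j ω - p j)) + d) ^ 2) t ≤ t := fun ω => min_le_right _ _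
  have int_min : Integrable (fun ω => min (((∑ j, (η j ω - p j)) + d) ^ 2) t) μ :=
    integrable_of_ae_bound hminm t
      (ae_of_all μ fun ω => by rw [abs_of_nonneg (hmin0 ω)]; exact hmint ω)
  have int_minQ : Integrable (fun ω => min (((∑ j, (η j ω - p j)) + d) ^ 2) t * Q ω) μ := by
    refine integrable_of_ae_bound (hminm.mul hQm) t (ae_of_all μ fun ω => ?_)
    rw [abs_mul, abs_of_nonneg (hmin0 ω)]
    calc min (((∑ j, (η j ω - p j)) + d) ^ 2) t * |Q ω|
        ≤ t * 1 := mul_le_mul (hmint ω) (abs_le.2 ⟨by linarith [hQ0 ω], hQ1 ω⟩)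
          (abs_nonneg _) ht0.le
      _ = t := mul_one t
  -- second moment of Y
  have EY2 : ∫ ω, ((∑ j, (η j ω - p j)) + d) ^ 2 ∂μ = V + d ^ 2 := by
    have e : (fun ω => ((∑ j, (η j ω - p j)) + d) ^ 2)
        = fun ω => (∑ j, (η j ω - p j)) ^ 2 + ((2 * d) * (∑ j, (η j ω - p j)) + d ^ 2) :=
      funext fun ω => by ring
    have I1 : Integrable (fun ω => (2 * d) * (∑ j, (η j ω - p j)) + d ^ 2) μ := by
      exact (intT1.const_mul (2 * d)).add (integrable_const _)
    rw [e, integral_add intT2 I1, integral_add (intT1.const_mul (2 * d)) (integrable_const _),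
      integral_const_mul, integral_const, hT1, hT2]
    simp
  -- fourth moment of Y
  have h8V : 8 * V ≤ 16 / p₀ * V ^ 2 := by
    rw [div_mul_eq_mul_div, le_div_iff₀ hp₀]
    nlinarith [hV0, hVp]
  have EY4 : ∫ ω, ((∑ j, (η j ω - p j)) + d) ^ 4 ∂μ ≤ (24 + 16 / p₀) * (V + d ^ 2) ^ 2 := by
    have I8 : Integrable (fun ω => 8 * (∑ j, (η j ω - p j)) ^ 4 + 8 * d ^ 4) μ := by
      exact ((integrable_pow_of_ae_bound hTm hTb 4).const_mul 8).add (integrable_const _)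
    have step1 : ∫ ω, ((∑ j, (η j ω - p j)) + d) ^ 4 ∂μ
        ≤ ∫ ω, (8 * (∑ j, (η j ω - p j)) ^ 4 + 8 * d ^ 4) ∂μ := by
      exact integral_mono intY4 I8 fun ω => pow_four_add_le _ d
    have step2 : ∫ ω, (8 * (∑ j, (η j ω - p j)) ^ 4 + 8 * d ^ 4) ∂μ
        = 8 * (∫ ω, (∑ j, (η j ω - p j)) ^ 4 ∂μ) + 8 * d ^ 4 := by
      rw [integral_add ((integrable_pow_of_ae_bound hTm hTb 4).const_mul 8) (integrable_const _),
        integral_const_mul, integral_const]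
      simp
    have h16 : (0:ℝ) ≤ 16 / p₀ := by positivity
    calc ∫ ω, ((∑ j, (η j ω - p j)) + d) ^ 4 ∂μ
        ≤ 8 * (∫ ω, (∑ j, (η j ω - p j)) ^ 4 ∂μ) + 8 * d ^ 4 := by rw [← step2]; exact step1
      _ ≤ 8 * (3 * V ^ 2 + V) + 8 * d ^ 4 := by linarith [hT4]
      _ ≤ (24 + 16 / p₀) * (V + d ^ 2) ^ 2 := by
          nlinarith [h8V, sq_nonneg d, hV0.le, mul_nonneg (mul_nonneg h16 hV0.le) (sq_nonneg d),
            mul_nonneg h16 (sq_nonneg (d ^ 2))]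
  -- chain of inequalities
  have ineq1 : ∫ ω, min (((∑ j, (η j ω - p j)) + d) ^ 2) t * Q ω ∂μ
      ≤ ∫ ω, ((∑ j, (η j ω - p j)) + d) ^ 2 * Q ω ∂μ :=
    integral_mono int_minQ intY2Q fun ω =>
      mul_le_mul_of_nonneg_right (min_le_left _ _) (hQ0 ω)
  have ineq2 : (∫ ω, min (((∑ j, (η j ω - p j)) + d) ^ 2) t ∂μ) - t * (1 - ∫ ω, Q ω ∂μ)
      ≤ ∫ ω, min (((∑ j, (η j ω - p j)) + d) ^ 2) t * Q ω ∂μ := by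
    have I2 : Integrable (fun ω => t * (1 - Q ω)) μ := by
      exact ((integrable_const 1).sub intQ).const_mul t
    have hInt : Integrable
        (fun ω => min (((∑ j, (η j ω - p j)) + d) ^ 2) t - t * (1 - Q ω)) μ := by
      exact int_min.sub I2
    have hmono := integral_mono hInt int_minQ fun ω =>
      min_weight_ineq (hmint ω) (hQ1 ω)
    have heq : ∫ ω, (min (((∑ j, (η j ω - p j)) + d) ^ 2) t - t * (1 - Q ω)) ∂μ
        = (∫ ω, min (((∑ j, (η j ω - p j)) + d) ^ 2) t ∂μ) - t * (1 - ∫ ω, Q ω ∂μ) := by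
      rw [integral_sub int_min I2, integral_const_mul,
        integral_sub (integrable_const 1) intQ, integral_const]
      simp
    linarith [hmono, heq ▸ hmono]
  have ineq3 : (V + d ^ 2) / 2 ≤ ∫ ω, min (((∑ j, (η j ω - p j)) + d) ^ 2) t ∂μ := by
    have pt : ∀ ω, ((∑ j, (η j ω - p j)) + d) ^ 2 - ((∑ j, (η j ω - p j)) + d) ^ 4 / (4 * t)
        ≤ min (((∑ j, (η j ω - p j)) + d) ^ 2) t :=
      fun ω => sub_div_le_min _ t ht0
    have hmono := integral_mono (intY2.sub (intY4.div_const (4 * t))) int_min pt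
    have heq : ∫ ω, (((∑ j, (η j ω - p j)) + d) ^ 2
          - ((∑ j, (η j ω - p j)) + d) ^ 4 / (4 * t)) ∂μ
        = (V + d ^ 2) - (∫ ω, ((∑ j, (η j ω - p j)) + d) ^ 4 ∂μ) / (4 * t) := by
      rw [integral_sub intY2 (intY4.div_const _), integral_div, EY2]
    have hEY4' : (∫ ω, ((∑ j, (η j ω - p j)) + d) ^ 4 ∂μ) / (4 * t) ≤ (V + d ^ 2) / 2 := by
      rw [div_le_iff₀ h4t]
      calc ∫ ω, ((∑ j, (η j ω - p j)) + d) ^ 4 ∂μ ≤ (24 + 16 / p₀) * (V + d ^ 2) ^ 2 := EY4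
        _ = (V + d ^ 2) / 2 * (4 * t) := by rw [htdef]; ring
    linarith [heq ▸ hmono]
  -- putting it together
  have htε : t * (p₀ / (48 * p₀ + 32)) = (V + d ^ 2) / 4 := by
    rw [htdef]
    field_simp
    ring
  have hQε : 1 - ∫ ω, Q ω ∂μ ≤ p₀ / (48 * p₀ + 32) := by linarith [hQE]
  have htQ : t * (1 - ∫ ω, Q ω ∂μ) ≤ (V + d ^ 2) / 4 := by
    rw [← htε]
    exact mul_le_mul_of_nonneg_left hQε ht0.le
  have hgoal : (fun ω => ((∑ j, η j ω) - m) ^ 2 * Q ω)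
      = fun ω => ((∑ j, (η j ω - p j)) + d) ^ 2 * Q ω := by
    funext ω
    rw [hddef, Finset.sum_sub_distrib]
    ring_nf
  rw [hgoal]
  have hfin : p₀ / 8 * N ≤ (V + d ^ 2) / 4 := by nlinarith [hVlb, sq_nonneg d]
  linarith [ineq1, ineq2, ineq3, htQ, hfin]
end

section
/- Let X, X' ⊆ S² be two nonempty closed connected sets, each symmetric under the antipodal map x ↦ −x. Then X ∩ X' ≠ ∅. -/
open Metric Set
open scoped Classical

noncomputable section SphereWindingProofAux




/-- Two continuous logarithm-lifts of the same function have the same endpoint difference. -/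
lemma liftDiffUnique {g h : ℝ → ℂ} (hg : Continuous g) (hh : Continuous h)
    (he : ∀ s, Complex.exp (g s) = Complex.exp (h s)) :
    g 1 - g 0 = h 1 - h 0 := by
  have key : ∀ s : ℝ, ∃ n : ℤ, g s - h s = n * (2 * Real.pi * Complex.I) := by
    intro s
    obtain ⟨n, hn⟩ := Complex.exp_eq_exp_iff_exists_int.mp (he s)
    exact ⟨n, by rw [hn]; ring⟩
  have him : ∀ s : ℝ, ∃ n : ℤ, (g s - h s).im = n * (2 * Real.pi) := by
    intro s
    obtain ⟨n, hn⟩ := key s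
    refine ⟨n, by rw [hn]; simp [Complex.mul_im]⟩
  have hre : ∀ s : ℝ, (g s - h s).re = 0 := by
    intro s
    obtain ⟨n, hn⟩ := key s
    rw [hn]; simp [Complex.mul_re]
  have hcont : Continuous fun s => (g s - h s).im :=
    (Complex.continuous_im).comp (hg.sub hh)
  have h01 : (g 1 - h 1).im = (g 0 - h 0).im := by
    by_contra hne
    obtain ⟨n0, hn0⟩ := him 0
    obtain ⟨n1, hn1⟩ := him 1
    have hpi := Real.pi_pos
    have hne' : n0 ≠ n1 := by
      intro hid
      exact hne (by rw [hn1, hn0, hid])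
    set a : ℤ := min n0 n1 with ha
    have hy : (a : ℝ) * (2 * Real.pi) + Real.pi ∈ uIcc ((g 0 - h 0).im) ((g 1 - h 1).im) := by
      rw [hn0, hn1, Set.mem_uIcc]
      rcases lt_or_gt_of_ne hne' with hlt | hlt
      · left
        have e : a = n0 := min_eq_left hlt.le
        have h1 : ((n0 : ℝ) + 1) ≤ n1 := by exact_mod_cast hlt
        rw [e]
        constructor <;> nlinarith
      · right
        have e : a = n1 := min_eq_right hlt.le
        have h1 : ((n1 : ℝ) + 1) ≤ n0 := by exact_mod_cast hlt
        rw [e]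
        constructor <;> nlinarith
    obtain ⟨s, _, hs⟩ := intermediate_value_uIcc
      (hcont.continuousOn (s := uIcc (0:ℝ) 1)) hy
    obtain ⟨n, hn⟩ := him s
    simp only [] at hs
    rw [hn] at hs
    have hpn := Real.pi_ne_zero
    have hr : (n : ℝ) * 2 = (a : ℝ) * 2 + 1 := by nlinarith
    have hz : (n : ℤ) * 2 = a * 2 + 1 := by exact_mod_cast hr
    omega
  have e1 : g 1 - h 1 = g 0 - h 0 := Complex.ext (by rw [hre 1, hre 0]) h01
  linear_combination e1






/-- Existence of a continuous logarithm along a "clamped" nonvanishing continuous function. -/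
lemma existsLift {f : ℝ → ℂ} (hf : Continuous f)
    (hcl : ∀ s : ℝ, f s = f (max 0 (min 1 s))) (h0 : ∀ s, f s ≠ 0) :
    ∃ g : ℝ → ℂ, Continuous g ∧ ∀ s, Complex.exp (g s) = f s := by
  -- minimum modulus on [0,1]
  obtain ⟨t₀, ht₀, hmin⟩ := isCompact_Icc.exists_isMinOn (α := ℝ) ⟨0, by norm_num⟩
    ((continuous_norm.comp hf).continuousOn (s := Icc (0:ℝ) 1))
  set m : ℝ := ‖f t₀‖ with hm
  have hmpos : 0 < m := norm_pos_iff.mpr (h0 t₀)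
  have hmle : ∀ t ∈ Icc (0:ℝ) 1, m ≤ ‖f t‖ := fun t ht => hmin ht
  -- uniform continuity on [0,1]
  have huc := isCompact_Icc.uniformContinuousOn_of_continuous (s := Icc (0:ℝ) 1)
    (hf.continuousOn)
  rw [Metric.uniformContinuousOn_iff] at huc
  obtain ⟨δ, hδpos, hδ⟩ := huc m hmpos
  obtain ⟨n, hn⟩ := exists_nat_one_div_lt hδpos
  set N : ℕ := n + 1 with hN
  have hNpos : (0:ℝ) < N := by positivity
  have hmesh : 1 / (N:ℝ) < δ := by exact_mod_cast hn
  -- the clamping functions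
  set c : ℕ → ℝ → ℝ := fun j s => min (((j:ℝ)+1)/N) (max ((j:ℝ)/N) s) with hc
  have hjN : ∀ j : ℕ, (j:ℝ) ≤ N → (j:ℝ)/N ∈ Icc (0:ℝ) 1 := by
    intro j hj
    exact ⟨by positivity, by rw [div_le_one hNpos]; exact hj⟩
  have hcmem : ∀ (j : ℕ) (s : ℝ), c j s ∈ Icc ((j:ℝ)/N) (((j:ℝ)+1)/N) := by
    intro j s
    refine ⟨le_min (by gcongr; linarith) (le_max_left _ _), min_le_left _ _⟩
  have hcmem' : ∀ (j : ℕ), j < N → ∀ s, c j s ∈ Icc (0:ℝ) 1 := by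
    intro j hj s
    obtain ⟨h1, h2⟩ := hcmem j s
    have hj1 : ((j:ℝ)+1) ≤ N := by exact_mod_cast hj
    constructor
    · exact le_trans (by positivity) h1
    · exact le_trans h2 (by rw [div_le_one hNpos]; exact hj1)
  -- ratios stay in ball 1 1
  have hball : ∀ (j : ℕ), j < N → ∀ s, f (c j s) / f ((j:ℝ)/N) ∈ ball (1:ℂ) 1 := by
    intro j hj s
    have hjmem : (j:ℝ)/N ∈ Icc (0:ℝ) 1 := hjN j (by exact_mod_cast hj.le)
    have hdist : dist (c j s) ((j:ℝ)/N) < δ := by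
      obtain ⟨h1, h2⟩ := hcmem j s
      rw [Real.dist_eq, abs_of_nonneg (by linarith)]
      have : ((j:ℝ)+1)/N - (j:ℝ)/N = 1/N := by field_simp; ring
      linarith [h2, this]
    have hfd : dist (f (c j s)) (f ((j:ℝ)/N)) < m := hδ _ (hcmem' j hj s) _ hjmem hdist
    have hfnz : f ((j:ℝ)/N) ≠ 0 := h0 _
    rw [mem_ball, dist_eq_norm]
    have : f (c j s) / f ((j:ℝ)/N) - 1 = (f (c j s) - f ((j:ℝ)/N)) / f ((j:ℝ)/N) := by
      field_simp
    rw [this, norm_div]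
    rw [dist_eq_norm] at hfd
    have hml : m ≤ ‖f ((j:ℝ)/N)‖ := hmle _ hjmem
    calc ‖f (c j s) - f ((j:ℝ)/N)‖ / ‖f ((j:ℝ)/N)‖
        < m / ‖f ((j:ℝ)/N)‖ := by
          have hd : (0:ℝ) < ‖f ((j:ℝ)/N)‖ := by linarith
          exact div_lt_div_of_pos_right hfd hd
      _ ≤ 1 := by rw [div_le_one (by linarith)]; exact hml
  have hballne : ∀ (w : ℂ), w ∈ ball (1:ℂ) 1 → w ≠ 0 := by
    intro w hw hwz
    rw [hwz, mem_ball] at hw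
    simp at hw
  -- the candidate lift (partial sums)
  set G : ℕ → ℝ → ℂ := fun M s => Complex.log (f 0) +
    ∑ j ∈ Finset.range M, Complex.log (f (c j s) / f ((j:ℝ)/N)) with hG
  -- continuity of the partial sums
  have hGcont : ∀ M : ℕ, M ≤ N → Continuous (G M) := by
    intro M hM
    apply continuous_const.add
    apply continuous_finset_sum
    intro j hj
    have hjlt : j < N := lt_of_lt_of_le (Finset.mem_range.mp hj) hM
    have hinner : Continuous fun s => f (c j s) / f ((j:ℝ)/N) := by
      apply Continuous.div_const
      apply hf.comp
      exact continuous_const.min (continuous_const.max continuous_id)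
    exact hinner.clog fun s => Complex.ball_one_subset_slitPlane (hball j hjlt s)
  -- the exponential identity for partial sums
  have hGexp : ∀ M : ℕ, M ≤ N → ∀ s : ℝ,
      Complex.exp (G M s) = f (min (max 0 s) ((M:ℝ)/N)) := by
    intro M
    induction M with
    | zero =>
      intro _ s
      simp only [hG, Finset.range_zero, Finset.sum_empty, add_zero]
      rw [Complex.exp_log (h0 0)]
      have h1 : ((0:ℕ):ℝ)/N = 0 := by norm_num
      rw [h1, min_eq_right (le_max_left _ _)]
    | succ M ih =>
      intro hM s
      have hM' : M ≤ N := le_of_lt (Nat.lt_of_lt_of_le (Nat.lt_succ_self M) hM)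
      have hMlt : M < N := Nat.lt_of_lt_of_le (Nat.lt_succ_self M) hM
      have hstep : G (M+1) s = G M s + Complex.log (f (c M s) / f ((M:ℝ)/N)) := by
        simp [hG, Finset.sum_range_succ, add_assoc]
      rw [hstep, Complex.exp_add, ih hM' s,
        Complex.exp_log (div_ne_zero (h0 _) (h0 _))]
      -- now a pure real manipulation
      set σ : ℝ := max 0 s with hσ
      have hσ0 : 0 ≤ σ := le_max_left _ _
      have hmaxeq : max ((M:ℝ)/N) s = max ((M:ℝ)/N) σ := by
        rw [hσ, max_comm (0:ℝ) s, ← max_assoc]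
        exact (max_eq_left (le_trans (by positivity) (le_max_left ((M:ℝ)/N) s))).symm
      have hMdiv : (M:ℝ)/N ≤ ((M:ℝ)+1)/N := by
        rw [div_le_div_iff₀ hNpos hNpos]; nlinarith
      have hcast : ((M+1 : ℕ) : ℝ) = (M:ℝ) + 1 := by push_cast; ring
      rcases le_total σ ((M:ℝ)/N) with hle | hle
      · have h1 : min σ ((M:ℝ)/N) = σ := min_eq_left hle
        have h2 : c M s = (M:ℝ)/N := by
          simp only [hc]
          rw [hmaxeq, max_eq_left hle, min_eq_right hMdiv]
        have h3 : min σ (((M:ℝ)+1)/N) = σ := min_eq_left (le_trans hle hMdiv)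
        rw [h1, h2, div_self (h0 _), mul_one, hcast, h3]
      · have h1 : min σ ((M:ℝ)/N) = (M:ℝ)/N := min_eq_right hle
        have h2 : c M s = min (((M:ℝ)+1)/N) σ := by
          simp only [hc]
          rw [hmaxeq, max_eq_right hle]
        rw [h1, h2, hcast, min_comm σ (((M:ℝ)+1)/N)]
        rw [mul_div_assoc', mul_comm, mul_div_assoc, div_self (h0 _), mul_one]
  refine ⟨G N, hGcont N le_rfl, fun s => ?_⟩
  rw [hGexp N le_rfl s, div_self (ne_of_gt hNpos), hcl s]
  congr 1
  rcases le_total s 0 with hs | hs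
  · rw [max_eq_left hs, min_eq_left (zero_le_one), min_eq_right (le_trans hs zero_le_one),
      max_eq_left hs]
  · rcases le_total s 1 with h1 | h1
    · rw [max_eq_right hs, min_eq_left h1, min_eq_right h1, max_eq_right hs]
    · rw [max_eq_right hs, min_eq_right h1, min_eq_left h1, max_eq_right zero_le_one]







/-- Total winding quantity of the pair of paths `L₁, L₂` around `z`
(`2πi` times the winding number of the concatenated loop, when defined). -/
def nuC (L₁ L₂ : ℝ → ℂ) (z : ℂ) : ℂ :=
  if h : ∃ p : (ℝ → ℂ) × (ℝ → ℂ),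
      (Continuous p.1 ∧ ∀ s, Complex.exp (p.1 s) = L₁ s - z) ∧
      (Continuous p.2 ∧ ∀ s, Complex.exp (p.2 s) = L₂ s - z)
  then (h.choose.1 1 - h.choose.1 0) + (h.choose.2 1 - h.choose.2 0) else 0

lemma nuC_eq {L₁ L₂ : ℝ → ℂ} {z : ℂ} {g₁ g₂ : ℝ → ℂ}
    (hg₁c : Continuous g₁) (hg₁ : ∀ s, Complex.exp (g₁ s) = L₁ s - z)
    (hg₂c : Continuous g₂) (hg₂ : ∀ s, Complex.exp (g₂ s) = L₂ s - z) :
    nuC L₁ L₂ z = (g₁ 1 - g₁ 0) + (g₂ 1 - g₂ 0) := by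
  have h : ∃ p : (ℝ → ℂ) × (ℝ → ℂ),
      (Continuous p.1 ∧ ∀ s, Complex.exp (p.1 s) = L₁ s - z) ∧
      (Continuous p.2 ∧ ∀ s, Complex.exp (p.2 s) = L₂ s - z) :=
    ⟨⟨g₁, g₂⟩, ⟨hg₁c, hg₁⟩, ⟨hg₂c, hg₂⟩⟩
  classical
  rw [nuC, dif_pos h]
  have e1 := liftDiffUnique h.choose_spec.1.1 hg₁c
    (fun s => by rw [h.choose_spec.1.2 s, hg₁ s])
  have e2 := liftDiffUnique h.choose_spec.2.1 hg₂c
    (fun s => by rw [h.choose_spec.2.2 s, hg₂ s])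
  rw [e1, e2]

section NuProps

variable {L₁ L₂ : ℝ → ℂ}

lemma ratio_mem_ball {w z z' : ℂ} (hwz : ‖z' - z‖ < ‖w - z‖) :
    (w - z') / (w - z) ∈ ball (1:ℂ) 1 := by
  have hne : w - z ≠ 0 := by
    intro h
    rw [h, norm_zero] at hwz
    exact absurd (norm_nonneg _) (not_le.mpr hwz)
  rw [mem_ball, dist_eq_norm]
  have : (w - z') / (w - z) - 1 = (z - z') / (w - z) := by
    rw [div_sub_one hne]; congr 1; ring
  rw [this, norm_div]
  rw [div_lt_one (norm_pos_iff.mpr hne)]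
  calc ‖z - z'‖ = ‖z' - z‖ := by rw [norm_sub_rev]
    _ < ‖w - z‖ := hwz

lemma ball_one_ne_zero {w : ℂ} (hw : w ∈ ball (1:ℂ) 1) : w ≠ 0 := by
  intro h
  rw [h, mem_ball] at hw
  simp at hw

/-- Local constancy of `nuC`. -/
lemma nuC_perturb (hL₁ : Continuous L₁) (hL₂ : Continuous L₂)
    (hcl₁ : ∀ s : ℝ, L₁ s = L₁ (max 0 (min 1 s)))
    (hcl₂ : ∀ s : ℝ, L₂ s = L₂ (max 0 (min 1 s)))
    (hend0 : L₂ 0 = L₁ 1) (hend1 : L₂ 1 = L₁ 0)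
    {z z' : ℂ} (hz : ∀ s, ‖z' - z‖ < ‖L₁ s - z‖ ∧ ‖z' - z‖ < ‖L₂ s - z‖) :
    nuC L₁ L₂ z' = nuC L₁ L₂ z := by
  have hne₁ : ∀ s, L₁ s - z ≠ 0 := by
    intro s h
    have := (hz s).1
    rw [h, norm_zero] at this
    exact absurd (norm_nonneg _) (not_le.mpr this)
  have hne₂ : ∀ s, L₂ s - z ≠ 0 := by
    intro s h
    have := (hz s).2
    rw [h, norm_zero] at this
    exact absurd (norm_nonneg _) (not_le.mpr this)
  obtain ⟨g₁, hg₁c, hg₁⟩ := existsLift (f := fun s => L₁ s - z)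
    (hL₁.sub continuous_const) (fun s => by rw [← hcl₁ s]) hne₁
  obtain ⟨g₂, hg₂c, hg₂⟩ := existsLift (f := fun s => L₂ s - z)
    (hL₂.sub continuous_const) (fun s => by rw [← hcl₂ s]) hne₂
  have hmem₁ : ∀ s, (L₁ s - z') / (L₁ s - z) ∈ ball (1:ℂ) 1 := fun s => ratio_mem_ball (hz s).1
  have hmem₂ : ∀ s, (L₂ s - z') / (L₂ s - z) ∈ ball (1:ℂ) 1 := fun s => ratio_mem_ball (hz s).2
  set g₁' : ℝ → ℂ := fun s => g₁ s + Complex.log ((L₁ s - z') / (L₁ s - z)) with hG1def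
  set g₂' : ℝ → ℂ := fun s => g₂ s + Complex.log ((L₂ s - z') / (L₂ s - z)) with hG2def
  have hg₁'c : Continuous g₁' := by
    apply hg₁c.add
    exact ((hL₁.sub continuous_const).div (hL₁.sub continuous_const) hne₁).clog
      fun s => Complex.ball_one_subset_slitPlane (hmem₁ s)
  have hg₂'c : Continuous g₂' := by
    apply hg₂c.add
    exact ((hL₂.sub continuous_const).div (hL₂.sub continuous_const) hne₂).clog
      fun s => Complex.ball_one_subset_slitPlane (hmem₂ s)
  have hg₁' : ∀ s, Complex.exp (g₁' s) = L₁ s - z' := by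
    intro s
    rw [hG1def, Complex.exp_add, hg₁ s, Complex.exp_log (ball_one_ne_zero (hmem₁ s))]
    rw [mul_comm]; exact div_mul_cancel₀ _ (hne₁ s)
  have hg₂' : ∀ s, Complex.exp (g₂' s) = L₂ s - z' := by
    intro s
    rw [hG2def, Complex.exp_add, hg₂ s, Complex.exp_log (ball_one_ne_zero (hmem₂ s))]
    rw [mul_comm]; exact div_mul_cancel₀ _ (hne₂ s)
  rw [nuC_eq hg₁'c hg₁' hg₂'c hg₂', nuC_eq hg₁c hg₁ hg₂c hg₂]
  simp only [hG1def, hG2def]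
  rw [hend0, hend1]
  ring

/-- `nuC` vanishes far away. -/
lemma nuC_far (hL₁ : Continuous L₁) (hL₂ : Continuous L₂)
    (hend0 : L₂ 0 = L₁ 1) (hend1 : L₂ 1 = L₁ 0)
    {z : ℂ} (hz : ∀ s, ‖L₁ s‖ < ‖z‖ ∧ ‖L₂ s‖ < ‖z‖) :
    nuC L₁ L₂ z = 0 := by
  have hz0 : z ≠ 0 := by
    intro h
    have := (hz 0).1
    rw [h, norm_zero] at this
    exact absurd (norm_nonneg _) (not_le.mpr this)
  have hzne : (-z : ℂ) ≠ 0 := neg_ne_zero.mpr hz0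
  have hmem : ∀ w : ℂ, ‖w‖ < ‖z‖ → (w - z) / (-z) ∈ ball (1:ℂ) 1 := by
    intro w hw
    rw [mem_ball, dist_eq_norm]
    have hzne : (-z : ℂ) ≠ 0 := neg_ne_zero.mpr hz0
    have : (w - z) / (-z) - 1 = w / (-z) := by
      rw [div_sub_one hzne]; congr 1; ring
    rw [this, norm_div, norm_neg, div_lt_one (norm_pos_iff.mpr hz0)]
    exact hw
  have hne : ∀ w : ℂ, ‖w‖ < ‖z‖ → w - z ≠ 0 := by
    intro w hw h
    rw [sub_eq_zero] at h
    rw [h] at hw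
    exact lt_irrefl _ hw
  set lam : ℂ → ℂ := fun w => Complex.log ((w - z) / (-z)) + Complex.log (-z) with hlam
  have hexp : ∀ w : ℂ, ‖w‖ < ‖z‖ → Complex.exp (lam w) = w - z := by
    intro w hw
    rw [hlam]
    rw [Complex.exp_add, Complex.exp_log (div_ne_zero (hne w hw) hzne),
      Complex.exp_log hzne]
    exact div_mul_cancel₀ _ hzne
  have hlamc₁ : Continuous fun s => lam (L₁ s) := by
    apply Continuous.add ?_ continuous_const
    exact ((hL₁.sub continuous_const).div_const _).clog
      fun s => Complex.ball_one_subset_slitPlane (hmem _ (hz s).1)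
  have hlamc₂ : Continuous fun s => lam (L₂ s) := by
    apply Continuous.add ?_ continuous_const
    exact ((hL₂.sub continuous_const).div_const _).clog
      fun s => Complex.ball_one_subset_slitPlane (hmem _ (hz s).2)
  rw [nuC_eq hlamc₁ (fun s => hexp _ (hz s).1) hlamc₂ (fun s => hexp _ (hz s).2)]
  simp only [hlam]
  rw [hend0, hend1]
  ring

/-- Oddness: for an antipodally-symmetric loop, the winding around `0` is nonzero. -/
lemma nuC_sym (hL₁ : Continuous L₁)
    (hcl₁ : ∀ s : ℝ, L₁ s = L₁ (max 0 (min 1 s)))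
    (h0 : ∀ s, L₁ s ≠ 0)
    (hsym : ∀ s, L₂ s = -4 / (starRingEnd ℂ) (L₁ s))
    (hend0 : L₂ 0 = L₁ 1) :
    nuC L₁ L₂ 0 ≠ 0 := by
  obtain ⟨g, hgc, hg⟩ := existsLift hL₁ hcl₁ h0
  set c : ℂ := (Real.log 4 : ℝ) + Real.pi * Complex.I with hc
  set h : ℝ → ℂ := fun s => c - (starRingEnd ℂ) (g s) with hh
  have hhc : Continuous h := continuous_const.sub (Complex.continuous_conj.comp hgc)
  have hexpc : Complex.exp c = -4 := by
    rw [hc, Complex.exp_add, Complex.exp_pi_mul_I]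
    rw [← Complex.ofReal_exp, Real.exp_log (by norm_num)]
    norm_num
  have hexph : ∀ s, Complex.exp (h s) = L₂ s := by
    intro s
    rw [hh]
    rw [Complex.exp_sub, hexpc, Complex.exp_conj, hg s, hsym s]
  have hg' : ∀ s, Complex.exp (g s) = L₁ s - 0 := fun s => by rw [sub_zero]; exact hg s
  have hh' : ∀ s, Complex.exp (h s) = L₂ s - 0 := fun s => by rw [sub_zero]; exact hexph s
  have hnu := nuC_eq hgc hg' hhc hh'
  -- the endpoint relation
  have hrel : Complex.exp (g 1) = Complex.exp (h 0) := by rw [hg 1, hexph 0, hend0]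
  obtain ⟨m, hm⟩ := Complex.exp_eq_exp_iff_exists_int.mp hrel
  simp only [hh] at hm
  -- conjugate relation
  have hmconj := congrArg (starRingEnd ℂ) hm
  simp only [map_sub, map_add, map_mul, Complex.conj_ofReal, Complex.conj_I, map_intCast,
    Complex.conj_conj, map_ofNat, hc] at hmconj
  rw [hc] at hm
  intro hzero
  rw [hnu] at hzero
  simp only [hh] at hzero
  -- derive the imaginary part identity
  have key : (2 * Real.pi + 4 * Real.pi * (m : ℝ) : ℂ) * Complex.I = 0 := by
    push_cast
    linear_combination hzero - hm + hmconj
  have : (2 * Real.pi + 4 * Real.pi * (m : ℝ)) = 0 := by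
    have := congrArg Complex.im key
    simpa using this
  have hpi := Real.pi_ne_zero
  have hm' : (2 : ℝ) + 4 * (m : ℝ) = 0 := by
    have : Real.pi * (2 + 4 * (m:ℝ)) = 0 := by ring_nf; ring_nf at this; linarith
    rcases mul_eq_zero.mp this with h | h
    · exact absurd h hpi
    · exact h
  have : (2 : ℤ) + 4 * m = 0 := by exact_mod_cast hm'
  omega

end NuProps



end SphereWindingProofAux




open scoped RealInnerProductSpace


set_option maxHeartbeats 1000000 in
/-- **Antipodally symmetric connected sets on `S²` intersect.** If `X, X' ⊆ S²` are
nonempty closed connected sets, each symmetric under the antipodal map `x ↦ −x`,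
then `X ∩ X' ≠ ∅`. -/
theorem symmetric_connected_sets_intersect
    (X X' : Set (EuclideanSpace ℝ (Fin 3)))
    (hXsub : X ⊆ sphere (0 : EuclideanSpace ℝ (Fin 3)) 1)
    (hX'sub : X' ⊆ sphere (0 : EuclideanSpace ℝ (Fin 3)) 1)
    (hXcl : IsClosed X) (hX'cl : IsClosed X')
    (hXconn : IsConnected X) (hX'conn : IsConnected X')
    (hXsym : ∀ x ∈ X, -x ∈ X) (hX'sym : ∀ x ∈ X', -x ∈ X') :
    (X ∩ X').Nonempty := by
  classical
  by_contra hemp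
  rw [Set.not_nonempty_iff_eq_empty] at hemp
  have hdisj : ∀ a ∈ X, a ∉ X' := by
    intro a ha ha'
    have : a ∈ X ∩ X' := ⟨ha, ha'⟩
    rw [hemp] at this
    exact this
  obtain ⟨x₀, hx₀⟩ := hXconn.nonempty
  obtain ⟨q, hq⟩ := hX'conn.nonempty
  have hqs : ‖q‖ = 1 := mem_sphere_zero_iff_norm.mp (hX'sub hq)
  have hq0 : q ≠ 0 := by intro h; rw [h, norm_zero] at hqs; norm_num at hqs
  have hnegq : -q ∈ X' := hX'sym q hq
  have hqnq : q ≠ -q := by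
    intro h
    apply hq0
    have h2 : q + q = 0 := by nth_rewrite 2 [h]; simp
    have : (2 : ℝ) • q = 0 := by rw [two_smul]; exact h2
    simpa using this
  -- dimension of the orthogonal complement
  have hdim : Module.finrank ℝ ((ℝ ∙ q)ᗮ : Submodule ℝ (EuclideanSpace ℝ (Fin 3))) = 2 := by
    have h1 : Module.finrank ℝ (ℝ ∙ q : Submodule ℝ (EuclideanSpace ℝ (Fin 3))) = 1 := finrank_span_singleton hq0
    have h2 := Submodule.finrank_add_finrank_orthogonal (K := (ℝ ∙ q : Submodule ℝ (EuclideanSpace ℝ (Fin 3))))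
    have h3 : Module.finrank ℝ (EuclideanSpace ℝ (Fin 3)) = 3 := finrank_euclideanSpace_fin
    omega
  -- a linear isometry from the complement to ℂ
  set ι : ((ℝ ∙ q)ᗮ : Submodule ℝ (EuclideanSpace ℝ (Fin 3))) ≃ₗᵢ[ℝ] ℂ :=
    (((stdOrthonormalBasis ℝ ((ℝ ∙ q)ᗮ : Submodule ℝ (EuclideanSpace ℝ (Fin 3)))).reindex
      (finCongr hdim)).repr.trans Complex.orthonormalBasisOneI.repr.symm) with hι
  -- the chart and its inverse
  set ψ : (EuclideanSpace ℝ (Fin 3)) → ℂ := fun y => ι (stereoToFun q y) with hψ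
  set invψ : ℂ → (EuclideanSpace ℝ (Fin 3)) := fun z => ((stereoInvFun hqs (ι.symm z) : sphere (0:(EuclideanSpace ℝ (Fin 3))) 1) : (EuclideanSpace ℝ (Fin 3))) with hinvψ
  have hinvmem : ∀ z, invψ z ∈ sphere (0:(EuclideanSpace ℝ (Fin 3))) 1 := fun z => (stereoInvFun hqs (ι.symm z)).2
  have hinvne : ∀ z, invψ z ≠ q := by
    intro z h
    exact stereoInvFun_ne_north_pole hqs (ι.symm z) (Subtype.ext h)
  have hleft : ∀ y, y ∈ sphere (0:(EuclideanSpace ℝ (Fin 3))) 1 → y ≠ q → invψ (ψ y) = y := by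
    intro y hy hne
    have h1 : ((⟨y, hy⟩ : sphere (0:(EuclideanSpace ℝ (Fin 3))) 1) : (EuclideanSpace ℝ (Fin 3))) ≠ q := hne
    have h2 := stereo_left_inv hqs (x := ⟨y, hy⟩) h1
    calc invψ (ψ y) = ((stereoInvFun hqs (stereoToFun q y) : sphere (0:(EuclideanSpace ℝ (Fin 3))) 1) : (EuclideanSpace ℝ (Fin 3))) := by
          rw [hinvψ, hψ]; simp only [LinearIsometryEquiv.symm_apply_apply]
      _ = y := congrArg Subtype.val h2
  have hright : ∀ z, ψ (invψ z) = z := by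
    intro z
    have h2 := stereo_right_inv hqs (ι.symm z)
    calc ψ (invψ z) = ι (stereoToFun q (invψ z)) := rfl
      _ = ι (ι.symm z) := by rw [hinvψ]; simp only []; rw [h2]
      _ = z := ι.apply_symm_apply z
  have hinvcont : Continuous invψ :=
    continuous_subtype_val.comp ((continuous_stereoInvFun hqs).comp ι.symm.continuous)
  have hopen_dom : IsOpen {y : (EuclideanSpace ℝ (Fin 3)) | (innerSL ℝ q) y ≠ (1:ℝ)} :=
    isOpen_compl_singleton.preimage (innerSL ℝ q).continuous
  have hψcont : ContinuousOn ψ {y : (EuclideanSpace ℝ (Fin 3)) | (innerSL ℝ q) y ≠ (1:ℝ)} :=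
    ι.continuous.comp_continuousOn continuousOn_stereoToFun
  have hdom : ∀ y, y ∈ sphere (0:(EuclideanSpace ℝ (Fin 3))) 1 → y ≠ q → (innerSL ℝ q) y ≠ (1:ℝ) := by
    intro y hy hne h1
    apply hne
    have hy1 : ‖y‖ = 1 := mem_sphere_zero_iff_norm.mp hy
    exact ((inner_eq_one_iff_of_norm_eq_one hqs hy1).mp h1).symm
  -- the antipodal identity
  have hkey : ∀ y, y ∈ sphere (0:(EuclideanSpace ℝ (Fin 3))) 1 → y ≠ q → y ≠ -q →
      ψ (-y) * (starRingEnd ℂ) (ψ y) = -4 ∧ ψ y ≠ 0 := by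
    intro y hy h1 h2
    have hy1 : ‖y‖ = 1 := mem_sphere_zero_iff_norm.mp hy
    set a : ℝ := ⟪q, y⟫ with ha
    set P := ((ℝ ∙ q)ᗮ : Submodule ℝ (EuclideanSpace ℝ (Fin 3))).orthogonalProjectionOnto with hP
    have split : y = a • q + ((P y : (EuclideanSpace ℝ (Fin 3)))) := by
      rw [ha, hP]
      convert ((ℝ ∙ q).starProjection_add_starProjection_orthogonal y).symm using 2
      exact (Submodule.starProjection_unit_singleton ℝ hqs y).symm
      rfl
    have hvy : ⟪q, ((P y : (EuclideanSpace ℝ (Fin 3))))⟫ = 0 :=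
      Submodule.mem_orthogonal_singleton_iff_inner_right.mp (P y).2
    have hvy' : ⟪a • q, ((P y : (EuclideanSpace ℝ (Fin 3))))⟫ = 0 := by
      rw [real_inner_smul_left, hvy, mul_zero]
    have pythag : 1 = a ^ 2 + ‖(P y : (EuclideanSpace ℝ (Fin 3)))‖ ^ 2 := by
      have hn := norm_add_sq_eq_norm_sq_add_norm_sq_of_inner_eq_zero _ _ hvy'
      rw [← split, hy1] at hn
      have hsm : ‖a • q‖ = |a| := by rw [norm_smul, hqs, mul_one, Real.norm_eq_abs]
      rw [hsm] at hn
      nlinarith [hn, sq_abs a]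
    have ha1 : a < 1 := by
      rw [ha]
      exact (inner_lt_one_iff_real_of_norm_eq_one hqs hy1).mpr (fun h => h1 h.symm)
    have ha2 : -1 < a := by
      have hy1' : ‖-y‖ = 1 := by rw [norm_neg]; exact hy1
      have hqny : q ≠ -y := by
        intro h
        exact h2 (by rw [h]; simp)
      have hlt := (inner_lt_one_iff_real_of_norm_eq_one hqs hy1').mpr hqny
      rw [inner_neg_right] at hlt
      rw [ha]
      linarith
    have h1a : (1:ℝ) - a ≠ 0 := by linarith
    have h1a' : (1:ℝ) + a ≠ 0 := by linarith
    have hinner_y : (innerSL ℝ q) y = a := rfl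
    have hinner_ny : (innerSL ℝ q) (-y) = -a := by
      rw [map_neg, hinner_y]
    have e1 : ψ y = (((2 / (1 - a) : ℝ)) : ℂ) * ι (P y) := by
      have hs1 : stereoToFun q y = (2 / (1 - a)) • (P y) := rfl
      rw [hψ]
      simp only []
      rw [hs1, map_smul, Complex.real_smul]
    have e2 : ψ (-y) = -((((2 / (1 + a) : ℝ)) : ℂ) * ι (P y)) := by
      have hs2 : stereoToFun q (-y) = (2 / (1 - (inner ℝ q (-y) : ℝ))) • (P (-y)) := rfl
      rw [hψ]
      simp only []
      rw [hs2, inner_neg_right, map_neg, smul_neg, map_neg, map_smul, Complex.real_smul,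
        ← ha, sub_neg_eq_add]
    have hPy2 : ‖(P y : (EuclideanSpace ℝ (Fin 3)))‖ ^ 2 = 1 - a ^ 2 := by linarith
    have e3 : ι (P y) * (starRingEnd ℂ) (ι (P y)) = ((1 - a^2 : ℝ) : ℂ) := by
      rw [Complex.mul_conj]
      congr 1
      rw [Complex.normSq_eq_norm_sq, ι.norm_map, Submodule.coe_norm,
        hPy2]
    have hPynorm : ‖(P y : (EuclideanSpace ℝ (Fin 3)))‖ ≠ 0 := by
      intro h
      rw [h] at hPy2
      nlinarith
    have wne : ι (P y) ≠ 0 := by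
      intro h
      apply hPynorm
      have h0 : ‖ι (P y)‖ = 0 := by rw [h, norm_zero]
      rw [ι.norm_map, Submodule.coe_norm] at h0
      exact h0
    constructor
    · have expand : ψ (-y) * (starRingEnd ℂ) (ψ y) =
          -(((2 / (1 + a) : ℝ) : ℂ) * ((2 / (1 - a) : ℝ) : ℂ) *
            (ι (P y) * (starRingEnd ℂ) (ι (P y)))) := by
        rw [e1, e2, map_mul, Complex.conj_ofReal]
        ring
      have hr : -((2 / (1 + a)) * (2 / (1 - a)) * (1 - a ^ 2)) = (-4 : ℝ) := by
        field_simp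
        ring
      rw [expand, e3, ← Complex.ofReal_mul, ← Complex.ofReal_mul, ← Complex.ofReal_neg, hr]
      norm_num
    · rw [e1]
      exact mul_ne_zero (by
        rw [Complex.ofReal_ne_zero]
        exact div_ne_zero two_ne_zero h1a) wne
  -- the south pole goes to the origin
  have hψnegq : ψ (-q) = 0 := by
    rw [hψ]
    simp only [stereoToFun_apply]
    have h1 : ((ℝ ∙ q)ᗮ : Submodule ℝ (EuclideanSpace ℝ (Fin 3))).orthogonalProjectionOnto (-q) = 0 := by
      rw [map_neg, Submodule.orthogonalProjectionOnto_orthogonalComplement_singleton_eq_zero, neg_zero]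
    rw [h1, smul_zero, map_zero]
  -- the open region
  set Ω : Set ℂ := ψ '' (sphere (0:(EuclideanSpace ℝ (Fin 3))) 1 \ X') with hΩ
  have hXsub' : X ⊆ sphere (0:(EuclideanSpace ℝ (Fin 3))) 1 \ X' := fun a ha => ⟨hXsub ha, hdisj a ha⟩
  have hmemne : ∀ y ∈ (sphere (0:(EuclideanSpace ℝ (Fin 3))) 1 \ X'), y ≠ q ∧ y ≠ -q :=
    fun y hy => ⟨fun h => hy.2 (h ▸ hq), fun h => hy.2 (h ▸ hnegq)⟩
  have hΩopen : IsOpen Ω := by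
    have hΩeq : Ω = invψ ⁻¹' X'ᶜ := by
      ext z
      constructor
      · rintro ⟨y, hy, rfl⟩
        have hyq := (hmemne y hy).1
        rw [Set.mem_preimage, hleft y hy.1 hyq]
        exact hy.2
      · intro hz
        exact ⟨invψ z, ⟨hinvmem z, hz⟩, hright z⟩
    rw [hΩeq]
    exact (hX'cl.isOpen_compl).preimage hinvcont
  have h0Ω : (0:ℂ) ∉ Ω := by
    rintro ⟨y, hy, hy0⟩
    exact (hkey y hy.1 (hmemne y hy).1 (hmemne y hy).2).2 hy0
  have hΩne0 : ∀ w ∈ Ω, w ≠ 0 := fun w hw h => h0Ω (h ▸ hw)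
  have hψX : ψ '' X ⊆ Ω := Set.image_mono hXsub'
  -- a path from ψ x₀ to ψ (-x₀) in Ω
  have hXq : ∀ y ∈ X, (innerSL ℝ q) y ≠ (1:ℝ) :=
    fun y hy => hdom y (hXsub hy) (hmemne y (hXsub' hy)).1
  have hconnim : IsConnected (ψ '' X) := hXconn.image ψ (hψcont.mono hXq)
  have hx₀m : -x₀ ∈ X := hXsym x₀ hx₀
  set C := connectedComponentIn Ω (ψ x₀) with hC
  have hψx₀Ω : ψ x₀ ∈ Ω := hψX ⟨x₀, hx₀, rfl⟩
  have hCopen : IsOpen C := hΩopen.connectedComponentIn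
  have hCsub : ψ '' X ⊆ C :=
    hconnim.isPreconnected.subset_connectedComponentIn ⟨x₀, hx₀, rfl⟩ hψX
  have hCconn : IsConnected C := isConnected_connectedComponentIn_iff.mpr hψx₀Ω
  have hCpc : IsPathConnected C := hCopen.isConnected_iff_isPathConnected.mp hCconn
  have hjoin : JoinedIn C (ψ x₀) (ψ (-x₀)) :=
    hCpc.joinedIn _ (hCsub ⟨x₀, hx₀, rfl⟩) _ (hCsub ⟨-x₀, hx₀m, rfl⟩)
  set γ := hjoin.somePath with hγ
  set L₁ : ℝ → ℂ := ⇑γ.extend with hL₁def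
  have hL₁cont : Continuous L₁ := γ.continuous_extend
  have hCsubΩ : C ⊆ Ω := connectedComponentIn_subset _ _
  have hL₁mem : ∀ s, L₁ s ∈ Ω := by
    intro s
    have h1 : L₁ s ∈ range γ.extend := ⟨s, rfl⟩
    rw [Path.extend_range] at h1
    obtain ⟨t, ht⟩ := h1
    rw [← ht]
    exact hCsubΩ (hjoin.somePath_mem t)
  have hL₁cl : ∀ s : ℝ, L₁ s = L₁ (max 0 (min 1 s)) := by
    intro s
    rcases le_total s 0 with hs | hs
    · have harg : max 0 (min 1 s) = 0 := by
        rw [min_eq_right (le_trans hs zero_le_one), max_eq_left hs]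
      rw [harg, hL₁def, γ.extend_of_le_zero hs, γ.extend_of_le_zero le_rfl]
    · rcases le_total 1 s with h1 | h1
      · have harg : max 0 (min 1 s) = 1 := by
          rw [min_eq_left h1, max_eq_right zero_le_one]
        rw [harg, hL₁def, γ.extend_of_one_le h1, γ.extend_of_one_le le_rfl]
      · have harg : max 0 (min 1 s) = s := by
          rw [min_eq_right h1, max_eq_right hs]
        rw [harg]
  set L₂ : ℝ → ℂ := fun s => -4 / (starRingEnd ℂ) (L₁ s) with hL₂def
  have hL₂cont : Continuous L₂ := by
    apply continuous_const.div (Complex.continuous_conj.comp hL₁cont)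
    intro s
    intro h
    exact hΩne0 _ (hL₁mem s) (by simpa using h)
  have hL₂cl : ∀ s : ℝ, L₂ s = L₂ (max 0 (min 1 s)) := by
    intro s
    rw [hL₂def]
    simp only []
    rw [← hL₁cl s]
  have hL₁y : ∀ s, invψ (L₁ s) ∈ (sphere (0:(EuclideanSpace ℝ (Fin 3))) 1 \ X') ∧ ψ (invψ (L₁ s)) = L₁ s := by
    intro s
    obtain ⟨y, hy, hye⟩ := hL₁mem s
    have hyq := (hmemne y hy).1
    rw [← hye, hleft y hy.1 hyq]
    exact ⟨hy, rfl⟩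
  have hsphere_neg : ∀ y : (EuclideanSpace ℝ (Fin 3)), y ∈ sphere (0:(EuclideanSpace ℝ (Fin 3))) 1 → -y ∈ sphere (0:(EuclideanSpace ℝ (Fin 3))) 1 := by
    intro y hy
    rw [mem_sphere_zero_iff_norm, norm_neg, ← mem_sphere_zero_iff_norm]
    exact hy
  have hcompl_neg : ∀ y : (EuclideanSpace ℝ (Fin 3)), y ∈ (sphere (0:(EuclideanSpace ℝ (Fin 3))) 1 \ X') → -y ∈ (sphere (0:(EuclideanSpace ℝ (Fin 3))) 1 \ X') := by
    intro y hy
    refine ⟨hsphere_neg y hy.1, fun h => hy.2 ?_⟩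
    have := hX'sym (-y) h
    rwa [neg_neg] at this
  have hapsi : ∀ y, y ∈ (sphere (0:(EuclideanSpace ℝ (Fin 3))) 1 \ X') → ψ (-y) = -4 / (starRingEnd ℂ) (ψ y) := by
    intro y hy
    have hne := hmemne y hy
    have hk := hkey y hy.1 hne.1 hne.2
    have hcne : (starRingEnd ℂ) (ψ y) ≠ 0 := by
      intro h
      exact hk.2 (by simpa using h)
    rw [eq_div_iff hcne]
    exact hk.1
  have hL₂mem : ∀ s, L₂ s ∈ Ω := by
    intro s
    obtain ⟨h1, h2⟩ := hL₁y s
    have : L₂ s = ψ (-(invψ (L₁ s))) := by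
      rw [hL₂def]
      simp only []
      rw [hapsi _ h1, h2]
    rw [this]
    exact ⟨-(invψ (L₁ s)), hcompl_neg _ h1, rfl⟩
  -- endpoints
  have hx₀sub : x₀ ∈ sphere (0:(EuclideanSpace ℝ (Fin 3))) 1 \ X' := hXsub' hx₀
  have hnx₀sub : -x₀ ∈ sphere (0:(EuclideanSpace ℝ (Fin 3))) 1 \ X' := hcompl_neg _ hx₀sub
  have hL₁0 : L₁ 0 = ψ x₀ := γ.extend_zero
  have hL₁1 : L₁ 1 = ψ (-x₀) := γ.extend_one
  have hend0 : L₂ 0 = L₁ 1 := by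
    rw [hL₂def]
    simp only []
    rw [hL₁0, hL₁1, ← hapsi _ hx₀sub]
  have hend1 : L₂ 1 = L₁ 0 := by
    rw [hL₂def]
    simp only []
    rw [hL₁0, hL₁1, ← hapsi _ hnx₀sub, neg_neg]
  -- the compact trace
  set K : Set ℂ := L₁ '' (Icc 0 1) ∪ L₂ '' (Icc 0 1) with hK
  have hKcomp : IsCompact K :=
    ((isCompact_Icc).image hL₁cont).union ((isCompact_Icc).image hL₂cont)
  have hKsub : K ⊆ Ω := by
    rintro w (⟨s, _, rfl⟩ | ⟨s, _, rfl⟩)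
    · exact hL₁mem s
    · exact hL₂mem s
  have hKne : K.Nonempty := ⟨L₁ 0, Or.inl ⟨0, by norm_num, rfl⟩⟩
  have hclamp_mem : ∀ s : ℝ, max 0 (min 1 s) ∈ Icc (0:ℝ) 1 :=
    fun s => ⟨le_max_left _ _, max_le zero_le_one (min_le_left _ _)⟩
  have hLK : ∀ s, L₁ s ∈ K ∧ L₂ s ∈ K := by
    intro s
    constructor
    · exact Or.inl ⟨max 0 (min 1 s), hclamp_mem s, (hL₁cl s).symm⟩
    · exact Or.inr ⟨max 0 (min 1 s), hclamp_mem s, (hL₂cl s).symm⟩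
  -- points of X' avoid K (through the chart)
  have hX'K : ∀ a ∈ X', a ≠ q → ψ a ∉ K := by
    intro a ha haq hmem
    obtain ⟨y, hy, hye⟩ := hKsub hmem
    have : a = y := by
      have h1 := hleft a (hX'sub ha) haq
      have h2 := hleft y hy.1 (hmemne y hy).1
      rw [← h1, ← hye, h2]
    rw [this] at ha
    exact hy.2 ha
  have h0K : (0:ℂ) ∉ K := fun h => h0Ω (hKsub h)
  -- bound for K
  obtain ⟨R, hR⟩ := hKcomp.isBounded.exists_norm_le
  have hR0 : 0 ≤ R := le_trans (norm_nonneg _) (hR _ hKne.choose_spec)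
  -- far-field estimate near q
  set Z : Set (EuclideanSpace ℝ (Fin 3)) := invψ '' (closedBall (0:ℂ) (R+1)) with hZ
  have hZcomp : IsCompact Z := (isCompact_closedBall _ _).image hinvcont
  have hqZ : q ∉ Z := by
    rintro ⟨w, _, h⟩
    exact hinvne w h
  have hZne : Z.Nonempty := ⟨invψ 0, 0, by simp only [mem_closedBall, dist_self]; linarith, rfl⟩
  have hεpos : 0 < infDist q Z := (hZcomp.isClosed.notMem_iff_infDist_pos hZne).mp hqZ
  have hfarq : ∀ b, b ∈ sphere (0:(EuclideanSpace ℝ (Fin 3))) 1 → b ≠ q → dist b q < infDist q Z →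
      R + 1 < ‖ψ b‖ := by
    intro b hb hbq hd
    by_contra hle
    push_neg at hle
    have hbZ : b ∈ Z := ⟨ψ b, by simpa [mem_closedBall] using hle, hleft b hb hbq⟩
    have hid : infDist q Z ≤ dist q b := infDist_le_dist_of_mem hbZ
    rw [dist_comm] at hd
    linarith
  -- the nonvanishing winding at the origin
  have hnu0 : nuC L₁ L₂ 0 ≠ 0 :=
    nuC_sym hL₁cont hL₁cl (fun s => hΩne0 _ (hL₁mem s)) (fun _ => rfl) hend0
  -- the locally constant function on X'
  set F : (EuclideanSpace ℝ (Fin 3)) → ℂ := fun a => if a = q then 0 else nuC L₁ L₂ (ψ a) with hF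
  have hFq : F q = 0 := by rw [hF]; simp
  have hFnq : F (-q) = nuC L₁ L₂ 0 := by
    rw [hF]
    simp only [if_neg (Ne.symm hqnq), hψnegq]
  -- local constancy
  have hloc : ∀ a, a ∈ X' → ∃ U : Set (EuclideanSpace ℝ (Fin 3)), IsOpen U ∧ a ∈ U ∧ ∀ b ∈ U ∩ X', F b = F a := by
    intro a ha
    rcases eq_or_ne a q with rfl | haq
    · -- near the north pole : F vanishes
      refine ⟨ball a (infDist a Z), isOpen_ball, mem_ball_self hεpos, ?_⟩
      rintro b ⟨hbU, hbX'⟩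
      rw [hFq]
      rcases eq_or_ne b a with rfl | hba
      · exact hFq
      · have hbs : b ∈ sphere (0:(EuclideanSpace ℝ (Fin 3))) 1 := hX'sub hbX'
        have hfar := hfarq b hbs hba (by rwa [mem_ball] at hbU)
        rw [hF]
        simp only [if_neg hba]
        apply nuC_far hL₁cont hL₂cont hend0 hend1
        intro s
        constructor
        · calc ‖L₁ s‖ ≤ R := hR _ (hLK s).1
            _ < ‖ψ b‖ := by linarith
        · calc ‖L₂ s‖ ≤ R := hR _ (hLK s).2
            _ < ‖ψ b‖ := by linarith
    · -- away from the north pole : use local constancy of nuC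
      have hzK : ψ a ∉ K := hX'K a ha haq
      have hd : 0 < infDist (ψ a) K := (hKcomp.isClosed.notMem_iff_infDist_pos hKne).mp hzK
      have hψca : ContinuousAt ψ a :=
        hψcont.continuousAt (hopen_dom.mem_nhds (hdom a (hX'sub ha) haq))
      obtain ⟨δ, hδpos, hδ⟩ := Metric.continuousAt_iff.mp hψca (infDist (ψ a) K / 2)
        (by positivity)
      set δ' : ℝ := min δ (dist a q) with hδ'
      have hδ'pos : 0 < δ' := lt_min hδpos (dist_pos.mpr haq)
      refine ⟨ball a δ', isOpen_ball, mem_ball_self hδ'pos, ?_⟩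
      rintro b ⟨hbU, hbX'⟩
      rw [mem_ball] at hbU
      have hbq : b ≠ q := by
        intro h
        rw [h] at hbU
        have : dist q a < dist a q := lt_of_lt_of_le hbU (min_le_right _ _)
        rw [dist_comm] at this
        exact lt_irrefl _ this
      have hψb : dist (ψ b) (ψ a) < infDist (ψ a) K / 2 :=
        hδ (lt_of_lt_of_le hbU (min_le_left _ _))
      rw [hF]
      simp only [if_neg hbq, if_neg haq]
      apply nuC_perturb hL₁cont hL₂cont hL₁cl hL₂cl hend0 hend1
      intro s
      have hds : ∀ w ∈ K, infDist (ψ a) K ≤ ‖w - ψ a‖ := by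
        intro w hw
        rw [norm_sub_rev, ← dist_eq_norm]
        exact infDist_le_dist_of_mem hw
      constructor
      · have h1 : infDist (ψ a) K ≤ ‖L₁ s - ψ a‖ := hds _ (hLK s).1
        have h2 : ‖ψ b - ψ a‖ < infDist (ψ a) K / 2 := by rwa [dist_eq_norm] at hψb
        linarith
      · have h1 : infDist (ψ a) K ≤ ‖L₂ s - ψ a‖ := hds _ (hLK s).2
        have h2 : ‖ψ b - ψ a‖ < infDist (ψ a) K / 2 := by rwa [dist_eq_norm] at hψb
        linarith
  -- conclude by connectedness of X'
  have hloc' : ∀ t : X', ∃ U : Set (EuclideanSpace ℝ (Fin 3)), IsOpen U ∧ (t:(EuclideanSpace ℝ (Fin 3))) ∈ U ∧ ∀ b ∈ U ∩ X', F b = F t :=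
    fun t => hloc t t.2
  choose U hU1 hU2 hU3 using hloc'
  set U₀ : Set (EuclideanSpace ℝ (Fin 3)) := ⋃ (t : X') (_ : F (t:(EuclideanSpace ℝ (Fin 3))) = 0), U t with hU₀
  set U₁ : Set (EuclideanSpace ℝ (Fin 3)) := ⋃ (t : X') (_ : F (t:(EuclideanSpace ℝ (Fin 3))) ≠ 0), U t with hU₁
  have hU₀open : IsOpen U₀ := isOpen_iUnion fun t => isOpen_iUnion fun _ => hU1 t
  have hU₁open : IsOpen U₁ := isOpen_iUnion fun t => isOpen_iUnion fun _ => hU1 t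
  have hcover : X' ⊆ U₀ ∪ U₁ := by
    intro a ha
    rcases eq_or_ne (F a) 0 with h | h
    · exact Or.inl (Set.mem_iUnion.mpr ⟨⟨a, ha⟩, Set.mem_iUnion.mpr ⟨h, hU2 ⟨a, ha⟩⟩⟩)
    · exact Or.inr (Set.mem_iUnion.mpr ⟨⟨a, ha⟩, Set.mem_iUnion.mpr ⟨h, hU2 ⟨a, ha⟩⟩⟩)
  have hne₀ : (X' ∩ U₀).Nonempty := by
    refine ⟨q, hq, Set.mem_iUnion.mpr ⟨⟨q, hq⟩, Set.mem_iUnion.mpr ⟨hFq, hU2 ⟨q, hq⟩⟩⟩⟩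
  have hne₁ : (X' ∩ U₁).Nonempty := by
    refine ⟨-q, hnegq, Set.mem_iUnion.mpr ⟨⟨-q, hnegq⟩,
      Set.mem_iUnion.mpr ⟨by rw [hFnq]; exact hnu0, hU2 ⟨-q, hnegq⟩⟩⟩⟩
  obtain ⟨b, hbX', hb₀, hb₁⟩ := hX'conn.isPreconnected U₀ U₁ hU₀open hU₁open hcover hne₀ hne₁
  obtain ⟨t₀, ht₀⟩ := Set.mem_iUnion.mp hb₀
  obtain ⟨ht₀F, hbt₀⟩ := Set.mem_iUnion.mp ht₀
  obtain ⟨t₁, ht₁⟩ := Set.mem_iUnion.mp hb₁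
  obtain ⟨ht₁F, hbt₁⟩ := Set.mem_iUnion.mp ht₁
  have e0 : F b = 0 := by rw [hU3 t₀ b ⟨hbt₀, hbX'⟩]; exact ht₀F
  have e1 : F b ≠ 0 := by rw [hU3 t₁ b ⟨hbt₁, hbX'⟩]; exact ht₁F
  exact e1 e0
end

section
/- Let H be a real (or complex) Hilbert space and let {J(z)}_{z ∈ Z} be a finite collection of unit vectors in H whose pairwise inner products satisfy |⟨J(z), J(z')⟩| ≤ δ for z ≠ z', with (|Z| − 1)δ < τ² for some 0 < τ ≤ 1. Suppose H contains a subspace orthogonal to span{J(z)} of dimension at least |Z|. Then there exists an orthonormal collection {J̃(z)}_{z ∈ Z} in H with ‖J̃(z) − J(z)‖ ≤ 2τ for every z ∈ Z. -/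
open Module

/-- Auxiliary: an orthonormal family indexed by `Z` inside a submodule of rank `≥ |Z|`. -/
lemma exists_orthonormal_in_submodule
    {H : Type*} [NormedAddCommGroup H] [InnerProductSpace ℝ H]
    {Z : Type*} [Fintype Z] (K : Submodule ℝ H)
    (hKrank : (Fintype.card Z : Cardinal) ≤ Module.rank ℝ K) :
    ∃ e : Z → H, (∀ z, e z ∈ K) ∧ Orthonormal ℝ e := by
  classical
  obtain ⟨f, hf⟩ := exists_linearIndependent_of_le_rank (R := ℝ) (M := K) hKrank
  have hf' : LinearIndependent ℝ (fun i => (f i : H)) := hf.map' K.subtype K.ker_subtype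
  set K' : Submodule ℝ H := Submodule.span ℝ (Set.range fun i => (f i : H)) with hK'
  haveI : FiniteDimensional ℝ K' := FiniteDimensional.span_of_finite ℝ (Set.finite_range _)
  have hcard : finrank ℝ K' = Fintype.card Z := by
    rw [hK', finrank_span_eq_card hf', Fintype.card_fin]
  set b := stdOrthonormalBasis ℝ K' with hb
  have hK'K : K' ≤ K := by
    rw [hK', Submodule.span_le]
    rintro - ⟨i, rfl⟩; exact (f i).2
  set σ := Fintype.equivFin Z with hσ
  refine ⟨fun z => (b (Fin.cast hcard.symm (σ z)) : H), fun z => hK'K (b _).2, ?_⟩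
  have hob := b.orthonormal
  rw [orthonormal_iff_ite] at hob ⊢
  intro z z'
  have := hob (Fin.cast hcard.symm (σ z)) (Fin.cast hcard.symm (σ z'))
  simpa [Submodule.coe_inner, Fin.cast, Fin.ext_iff, Fin.val_inj,
    σ.injective.eq_iff] using this

open scoped MatrixOrder

/-- **Quantitative orthonormalization of an almost-orthonormal system.** Let `H` be a
real Hilbert space and `J : Z → H` a finite family of unit vectors with pairwise inner
products bounded by `δ`, where `(|Z| − 1)δ < τ²` for some `0 < τ ≤ 1`. If `H` contains
a subspace orthogonal to all the `J z` of dimension at least `|Z|`, then there is an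
orthonormal family `J' : Z → H` with `‖J' z − J z‖ ≤ 2τ` for every `z`. -/
theorem almost_orthonormal_correction
    {H : Type*} [NormedAddCommGroup H] [InnerProductSpace ℝ H] [CompleteSpace H]
    {Z : Type*} [Fintype Z] (J : Z → H) (δ τ : ℝ)
    (hunit : ∀ z, ‖J z‖ = 1)
    (hδ : 0 ≤ δ)
    (hpair : ∀ z z', z ≠ z' → |(inner ℝ (J z) (J z') : ℝ)| ≤ δ)
    (hτ : 0 < τ) (hτ1 : τ ≤ 1)
    (hsmall : ((Fintype.card Z : ℝ) - 1) * δ < τ ^ 2)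
    (hdim : ∃ K : Submodule ℝ H,
      (∀ v ∈ K, ∀ z, (inner ℝ v (J z) : ℝ) = 0) ∧
      (Fintype.card Z : Cardinal) ≤ Module.rank ℝ K) :
    ∃ J' : Z → H, Orthonormal ℝ J' ∧ ∀ z, ‖J' z - J z‖ ≤ 2 * τ := by
  classical
  obtain ⟨K, hKorth, hKrank⟩ := hdim
  set n := Fintype.card Z with hn
  obtain ⟨e, heK, heon'⟩ := exists_orthonormal_in_submodule K hKrank
  have heon : ∀ z z', (inner ℝ (e z) (e z') : ℝ) = if z = z' then 1 else 0 :=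
    orthonormal_iff_ite.mp heon'
  -- the Gram matrix
  set Γ : Matrix Z Z ℝ := Matrix.of fun z z' =>
    if z = z' then τ ^ 2 else -(inner ℝ (J z) (J z') : ℝ) with hΓdef
  have hΓdiag : ∀ z, Γ z z = τ ^ 2 := fun z => by simp [hΓdef]
  have hΓoff : ∀ z z', z ≠ z' → Γ z z' = -(inner ℝ (J z) (J z') : ℝ) := fun z z' h => by
    simp [hΓdef, h]
  have hΓsym : Γ.IsHermitian := by
    ext z z'
    by_cases h : z = z'
    · simp [Γ, h]
    · simp [Γ, h, Ne.symm h, Matrix.conjTranspose_apply, real_inner_comm]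
  have hco : 0 ≤ τ ^ 2 - ((n : ℝ) - 1) * δ := by nlinarith
  have hpsd : Γ.PosSemidef := by
    refine Matrix.posSemidef_iff_dotProduct_mulVec.mpr ⟨hΓsym, fun x => ?_⟩
    have hexp : dotProduct (star x) (Γ.mulVec x)
        = ∑ z, ∑ z', x z * (Γ z z' * x z') := by
      simp [dotProduct, Matrix.mulVec, Finset.mul_sum]
    rw [hexp]
    have hterm : ∀ z z', (if z = z' then τ ^ 2 * x z ^ 2
          else -(δ / 2) * x z ^ 2 + -(δ / 2) * x z' ^ 2) ≤ x z * (Γ z z' * x z') := by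
      intro z z'
      by_cases h : z = z'
      · subst h
        rw [if_pos rfl, hΓdiag]
        nlinarith [sq_nonneg (x z)]
      · have h1 := (abs_le.mp (hpair z z' h)).1
        have h2 := (abs_le.mp (hpair z z' h)).2
        rw [if_neg h, hΓoff z z' h]
        nlinarith [sq_nonneg (x z + x z'), sq_nonneg (x z - x z')]
    have hAB : ∀ z z' : Z, (if z = z' then τ ^ 2 * x z ^ 2
          else -(δ / 2) * x z ^ 2 + -(δ / 2) * x z' ^ 2)
        = (-(δ / 2) * x z ^ 2 + -(δ / 2) * x z' ^ 2)
          + (if z = z' then (τ ^ 2 + δ) * x z ^ 2 else 0) := by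
      intro z z'
      by_cases h : z = z'
      · subst h; rw [if_pos rfl, if_pos rfl]; ring
      · rw [if_neg h, if_neg h]; ring
    calc (0:ℝ) ≤ (τ ^ 2 - ((n : ℝ) - 1) * δ) * ∑ z, x z ^ 2 :=
          mul_nonneg hco (Finset.sum_nonneg fun z _ => sq_nonneg _)
      _ = ∑ z, ∑ z', (if z = z' then τ ^ 2 * x z ^ 2
          else -(δ / 2) * x z ^ 2 + -(δ / 2) * x z' ^ 2) := by
          simp only [hAB, Finset.sum_add_distrib, Finset.sum_ite_eq, Finset.mem_univ, if_true,
            Finset.sum_const, Finset.card_univ, nsmul_eq_mul, ← hn, Finset.mul_sum]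
          rw [← Finset.sum_add_distrib, ← Finset.sum_add_distrib]
          refine Finset.sum_congr rfl fun z _ => ?_
          ring
      _ ≤ _ := Finset.sum_le_sum fun z _ => Finset.sum_le_sum fun z' _ => hterm z z'
  -- square root of the Gram matrix
  set B := CFC.sqrt Γ with hB
  have hBB : B * B = Γ := CFC.sqrt_mul_sqrt_self Γ hpsd.nonneg
  have hBsymm : ∀ i j, B i j = B j i := fun i j => by
    rw [hB]
    simpa using ((Matrix.LE.le.posSemidef (CFC.sqrt_nonneg Γ)).1.apply i j).symm
  -- the correction vectors
  set I : Z → H := fun z => ∑ w, B w z • e w with hI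
  have hIK : ∀ z, I z ∈ K := fun z =>
    Submodule.sum_mem K fun w _ => Submodule.smul_mem K _ (heK w)
  have hIJ : ∀ z z', (inner ℝ (I z) (J z') : ℝ) = 0 := fun z z' => hKorth _ (hIK z) z'
  have hJI : ∀ z z', (inner ℝ (J z) (I z') : ℝ) = 0 := fun z z' => by
    rw [real_inner_comm]; exact hIJ z' z
  have hII : ∀ z z', (inner ℝ (I z) (I z') : ℝ) = Γ z z' := by
    intro z z'
    have h1 : (inner ℝ (I z) (I z') : ℝ) = ∑ w, B z w * B w z' := by
      rw [hI]
      simp only [sum_inner, real_inner_smul_left, inner_sum, real_inner_smul_right, heon,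
        mul_ite, mul_one, mul_zero, Finset.sum_ite_eq, Finset.sum_ite_eq', Finset.mem_univ,
        if_true]
      refine Finset.sum_congr rfl fun w _ => ?_
      rw [hBsymm z w]; ring
    rw [h1, ← Matrix.mul_apply, hBB]
  -- inner products of the corrected vectors
  have hJJ : ∀ z, (inner ℝ (J z) (J z) : ℝ) = 1 := fun z => by
    rw [real_inner_self_eq_norm_sq, hunit]; norm_num
  have hinner : ∀ z z', (inner ℝ (J z + I z) (J z' + I z') : ℝ)
      = (inner ℝ (J z) (J z') : ℝ) + Γ z z' := by
    intro z z'
    rw [inner_add_left, inner_add_right, inner_add_right, hIJ, hJI, hII]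
    ring
  have hnorm2 : ∀ z, (inner ℝ (J z + I z) (J z + I z) : ℝ) = 1 + τ ^ 2 := by
    intro z
    rw [hinner z z, hJJ, hΓdiag]
  set s := Real.sqrt (1 + τ ^ 2) with hs
  have hs2 : s ^ 2 = 1 + τ ^ 2 := Real.sq_sqrt (by positivity)
  have hs1 : 1 ≤ s := by nlinarith [Real.sqrt_nonneg (1 + τ ^ 2)]
  have hs0 : 0 < s := lt_of_lt_of_le one_pos hs1
  set c := s⁻¹ with hc
  have hcs : c * s = 1 := inv_mul_cancel₀ hs0.ne'
  have hc0 : 0 < c := inv_pos.mpr hs0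
  have hval : c * (c * (1 + τ ^ 2)) = 1 := by
    rw [← hs2]
    linear_combination (c * s + 1) * hcs
  refine ⟨fun z => c • (J z + I z), ?_, ?_⟩
  · rw [orthonormal_iff_ite]
    intro z z'
    rw [real_inner_smul_left, real_inner_smul_right, hinner]
    by_cases h : z = z'
    · subst h
      rw [if_pos rfl, hJJ, hΓdiag]
      exact hval
    · rw [if_neg h, hΓoff z z' h]
      ring
  · intro z
    have h2 : (inner ℝ (c • (J z + I z)) (J z) : ℝ) = c := by
      rw [real_inner_smul_left, inner_add_left, hJJ, hIJ]; ring
    have h1 : ‖c • (J z + I z)‖ ^ 2 = 1 := by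
      rw [← real_inner_self_eq_norm_sq, real_inner_smul_left, real_inner_smul_right, hnorm2]
      exact hval
    have hn2 : ‖(c • (J z + I z)) - J z‖ ^ 2 = 2 - 2 * c := by
      rw [norm_sub_sq_real, h1, h2, hunit]; ring
    have hc1 : c ≤ 1 := by nlinarith [mul_nonneg hc0.le (sub_nonneg.mpr hs1)]
    have hkey : (1 - c) * s = s - 1 := by linear_combination -hcs
    have h1c : (1 : ℝ) - c ≤ s - 1 := by
      nlinarith [mul_nonneg (sub_nonneg.mpr hc1) (sub_nonneg.mpr hs1)]
    have hsle : s - 1 ≤ τ ^ 2 := by nlinarith [sq_nonneg (s - 1)]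
    have hb : ‖(c • (J z + I z)) - J z‖ ^ 2 ≤ (2 * τ) ^ 2 := by
      rw [hn2]; nlinarith [sq_nonneg τ]
    calc ‖(c • (J z + I z)) - J z‖
        = Real.sqrt (‖(c • (J z + I z)) - J z‖ ^ 2) := (Real.sqrt_sq (norm_nonneg _)).symm
      _ ≤ Real.sqrt ((2 * τ) ^ 2) := Real.sqrt_le_sqrt hb
      _ = 2 * τ := Real.sqrt_sq (by positivity)
end

section
/- Let ρ be a finite positive Borel measure on ℝ and ν a positive measure with ν ≤ ρ (i.e., ν(B) ≤ ρ(B) for all Borel sets B). Then for every S > 0, ∫_{−S}^{S} (1 − |s|/S) |ν̂(s)|² ds ≤ ∫_{−S}^{S} (1 − |s|/S) |ρ̂(s)|² ds, where μ̂(s) = ∫ e^{isξ} dμ(ξ). -/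
open MeasureTheory Set Complex


lemma integral_even_aux (f : ℝ → ℝ) (hc : Continuous f) (hf : ∀ x, f (-x) = f x) (S : ℝ) :
    ∫ x in (-S)..S, f x = 2 * ∫ x in (0:ℝ)..S, f x := by
  have h1 : ∫ x in (-S)..(0:ℝ), f x = ∫ x in (0:ℝ)..S, f x := by
    have h := intervalIntegral.integral_comp_neg (a := 0) (b := S) f
    simpa [hf] using h.symm
  have h2 := intervalIntegral.integral_add_adjacent_intervals
    (hc.intervalIntegrable (μ := volume) (-S) 0) (hc.intervalIntegrable 0 S)
  rw [← h2, h1]; ring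

noncomputable def fejerK (S t : ℝ) : ℝ := ∫ s in Icc (-S) S, (1 - |s| / S) * Real.cos (s * t)

lemma fejerK_formula {S : ℝ} (hS : 0 < S) (t : ℝ) :
    fejerK S t = if t = 0 then S else 2 * (1 - Real.cos (S * t)) / (S * t ^ 2) := by
  have hcont : Continuous fun s : ℝ => (1 - |s| / S) * Real.cos (s * t) := by fun_prop
  have heven : ∀ s : ℝ, (1 - |(-s)| / S) * Real.cos ((-s) * t) = (1 - |s| / S) * Real.cos (s * t) := by
    intro s; rw [abs_neg, neg_mul, Real.cos_neg]
  have hIcc : fejerK S t = ∫ s in (-S)..S, (1 - |s| / S) * Real.cos (s * t) := by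
    rw [fejerK, MeasureTheory.integral_Icc_eq_integral_Ioc,
      ← intervalIntegral.integral_of_le (by linarith : (-S) ≤ S)]
  rw [hIcc, integral_even_aux _ hcont heven]
  have habs : ∫ s in (0:ℝ)..S, (1 - |s| / S) * Real.cos (s * t)
      = ∫ s in (0:ℝ)..S, (1 - s / S) * Real.cos (s * t) := by
    apply intervalIntegral.integral_congr
    intro s hs
    rw [uIcc_of_le (le_of_lt hS)] at hs
    simp only [_root_.abs_of_nonneg hs.1]
  rw [habs]
  by_cases ht : t = 0
  · subst ht
    simp only [mul_zero, Real.cos_zero, mul_one, if_true]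
    rw [intervalIntegral.integral_sub intervalIntegrable_const
      (Continuous.intervalIntegrable (by fun_prop) 0 S)]
    simp only [intervalIntegral.integral_const, intervalIntegral.integral_div, integral_id]
    field_simp
    ring
  · rw [if_neg ht]
    have ht2 : t ^ 2 ≠ 0 := pow_ne_zero _ ht
    set F : ℝ → ℝ := fun x => (1 - x / S) * (Real.sin (x * t) / t) - Real.cos (x * t) / (S * t ^ 2) with hF
    have hderiv : ∀ x : ℝ, HasDerivAt F ((1 - x / S) * Real.cos (x * t)) x := by
      intro x
      have h1 : HasDerivAt (fun x : ℝ => x * t) t x := by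
        simpa using (hasDerivAt_id x).mul_const t
      have hsin : HasDerivAt (fun x : ℝ => Real.sin (x * t)) (Real.cos (x * t) * t) x :=
        ((Real.hasDerivAt_sin (x * t)).comp x h1 :)
      have hcos : HasDerivAt (fun x : ℝ => Real.cos (x * t)) (-Real.sin (x * t) * t) x :=
        ((Real.hasDerivAt_cos (x * t)).comp x h1 :)
      have ha : HasDerivAt (fun x : ℝ => 1 - x / S) (-(1 / S)) x := by
        simpa using ((hasDerivAt_id x).div_const S).const_sub 1
      have := (ha.mul (hsin.div_const t)).sub (hcos.div_const (S * t ^ 2))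
      refine this.congr_deriv ?_
      field_simp
      ring
    have hFTC := intervalIntegral.integral_eq_sub_of_hasDerivAt
      (fun x _ => hderiv x)
      (((continuous_const.sub (continuous_id.div_const S)).mul
        (Real.continuous_cos.comp (continuous_id.mul continuous_const))).intervalIntegrable 0 S)
    rw [hFTC, hF]
    simp only []
    rw [div_self (ne_of_gt hS)]
    field_simp
    simp only [Real.sin_zero, Real.cos_zero, mul_zero]
    ring

lemma fejerK_nonneg {S : ℝ} (hS : 0 < S) (t : ℝ) : 0 ≤ fejerK S t := by
  rw [fejerK_formula hS]
  split_ifs with ht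
  · exact hS.le
  · apply div_nonneg
    · have := Real.cos_le_one (S * t)
      linarith
    · positivity

lemma fejerK_measurable {S : ℝ} (hS : 0 < S) : Measurable (fejerK S) := by
  have : fejerK S = fun t => if t = 0 then S else 2 * (1 - Real.cos (S * t)) / (S * t ^ 2) := by
    funext t; exact fejerK_formula hS t
  rw [this]
  exact Measurable.ite (by simp) measurable_const (by fun_prop)

lemma fejerK_bound {S : ℝ} (hS : 0 < S) (t : ℝ) : ‖fejerK S t‖ ≤ 2 * S := by
  have h := norm_setIntegral_le_of_norm_le_const (μ := volume) (s := Icc (-S) S) (C := 1)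
    (f := fun s => (1 - |s| / S) * Real.cos (s * t)) measure_Icc_lt_top
    (fun s hs => by
      rw [Real.norm_eq_abs, abs_mul]
      have h1 : |s| ≤ S := abs_le.2 ⟨hs.1, hs.2⟩
      have h2 : |1 - |s| / S| ≤ 1 := by
        rw [abs_le]
        constructor
        · have : |s| / S ≤ 1 := (div_le_one hS).2 h1
          linarith
        · have : 0 ≤ |s| / S := div_nonneg (abs_nonneg s) hS.le
          linarith
      calc |1 - |s| / S| * |Real.cos (s * t)| ≤ 1 * 1 :=
            mul_le_mul h2 (Real.abs_cos_le_one _) (abs_nonneg _) zero_le_one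
        _ = 1 := mul_one 1)
  rw [Real.volume_real_Icc] at h
  calc ‖fejerK S t‖ ≤ 1 * max (S - -S) 0 := h
    _ = 2 * S := by rw [one_mul, max_eq_left (by linarith)]; ring

lemma fejer_identity (μ : Measure ℝ) [IsFiniteMeasure μ] {S : ℝ} (hS : 0 < S) :
    ∫ s in Icc (-S) S, (1 - |s| / S) * ‖∫ ξ, Complex.exp (Complex.I * s * ξ) ∂μ‖ ^ 2
      = ∫ p : ℝ × ℝ, fejerK S (p.1 - p.2) ∂(μ.prod μ) := by
  have hpt : ∀ s : ℝ, (1 - |s| / S) * ‖∫ ξ, Complex.exp (Complex.I * s * ξ) ∂μ‖ ^ 2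
      = ∫ p : ℝ × ℝ, (1 - |s| / S) * Real.cos (s * (p.1 - p.2)) ∂(μ.prod μ) := by
    intro s
    set z := ∫ ξ, Complex.exp (Complex.I * s * ξ) ∂μ with hz
    have hnorm : ‖z‖ ^ 2 = (z * (starRingEnd ℂ) z).re := by
      rw [Complex.mul_conj]
      simp [Complex.normSq_eq_norm_sq, ← Complex.ofReal_pow]
    have hconj : (starRingEnd ℂ) z = ∫ ξ, Complex.exp (-(Complex.I * s * ξ)) ∂μ := by
      rw [hz, ← integral_conj]
      congr 1; funext ξ
      rw [← Complex.exp_conj]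
      congr 1
      simp only [map_mul, Complex.conj_I, Complex.conj_ofReal]
      ring
    have hint : Integrable (fun p : ℝ × ℝ =>
        Complex.exp (Complex.I * s * (↑p.1 - ↑p.2))) (μ.prod μ) := by
      apply Integrable.mono' (integrable_const (1:ℝ))
        (Continuous.aestronglyMeasurable (by fun_prop))
      refine ae_of_all _ fun p => ?_
      rw [Complex.norm_exp]
      have : (Complex.I * s * (↑p.1 - ↑p.2)).re = 0 := by simp
      rw [this, Real.exp_zero]
    have hmul : z * (starRingEnd ℂ) z
        = ∫ p : ℝ × ℝ, Complex.exp (Complex.I * s * (↑p.1 - ↑p.2)) ∂(μ.prod μ) := by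
      rw [hconj, hz, ← MeasureTheory.integral_prod_mul]
      congr 1; funext p
      rw [← Complex.exp_add]
      congr 1
      ring
    have hre : (∫ p : ℝ × ℝ, Complex.exp (Complex.I * s * (↑p.1 - ↑p.2)) ∂(μ.prod μ)).re
        = ∫ p : ℝ × ℝ, Real.cos (s * (p.1 - p.2)) ∂(μ.prod μ) := by
      rw [← RCLike.re_to_complex, ← integral_re hint]
      congr 1; funext p
      have h1 : Complex.I * s * (↑p.1 - ↑p.2) = ((s * (p.1 - p.2) : ℝ) : ℂ) * Complex.I := by
        push_cast; ring
      rw [RCLike.re_to_complex, h1, Complex.exp_ofReal_mul_I_re]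
    rw [hnorm, hmul, hre, ← MeasureTheory.integral_const_mul]
  haveI : IsFiniteMeasure (volume.restrict (Icc (-S) S)) :=
    ⟨by rw [Measure.restrict_apply_univ]; exact measure_Icc_lt_top⟩
  have hG : Integrable
      (Function.uncurry fun s (p : ℝ × ℝ) => (1 - |s| / S) * Real.cos (s * (p.1 - p.2)))
      ((volume.restrict (Icc (-S) S)).prod (μ.prod μ)) := by
    apply Integrable.mono' (integrable_const (1:ℝ))
      (Continuous.aestronglyMeasurable (by fun_prop))
    have hae : ∀ᵐ q : ℝ × (ℝ × ℝ) ∂((volume.restrict (Icc (-S) S)).prod (μ.prod μ)),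
        q.1 ∈ Icc (-S) S := by
      rw [ae_iff]
      have hset : {q : ℝ × (ℝ × ℝ) | ¬ q.1 ∈ Icc (-S) S} = (Icc (-S) S)ᶜ ×ˢ univ := by
        ext q; simp
      rw [hset, Measure.prod_prod, Measure.restrict_apply measurableSet_Icc.compl]
      simp
    filter_upwards [hae] with q hq
    simp only [Function.uncurry]
    rw [Real.norm_eq_abs, abs_mul]
    have h1 : |q.1| ≤ S := abs_le.2 ⟨hq.1, hq.2⟩
    have h2 : |1 - |q.1| / S| ≤ 1 := by
      rw [abs_le]
      constructor
      · have : |q.1| / S ≤ 1 := (div_le_one hS).2 h1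
        linarith
      · have : 0 ≤ |q.1| / S := div_nonneg (abs_nonneg _) hS.le
        linarith
    calc |1 - |q.1| / S| * |Real.cos (q.1 * (q.2.1 - q.2.2))| ≤ 1 * 1 :=
          mul_le_mul h2 (Real.abs_cos_le_one _) (abs_nonneg _) zero_le_one
      _ = 1 := mul_one 1
  calc ∫ s in Icc (-S) S, (1 - |s| / S) * ‖∫ ξ, Complex.exp (Complex.I * s * ξ) ∂μ‖ ^ 2
      = ∫ s in Icc (-S) S,
          ∫ p : ℝ × ℝ, (1 - |s| / S) * Real.cos (s * (p.1 - p.2)) ∂(μ.prod μ) := by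
        exact integral_congr_ae (ae_of_all _ fun s => hpt s)
    _ = ∫ p : ℝ × ℝ, (∫ s in Icc (-S) S,
          (1 - |s| / S) * Real.cos (s * (p.1 - p.2))) ∂(μ.prod μ) :=
        MeasureTheory.integral_integral_swap hG
    _ = ∫ p : ℝ × ℝ, fejerK S (p.1 - p.2) ∂(μ.prod μ) := rfl

lemma prod_mono_aux (ρ ν : Measure ℝ) [IsFiniteMeasure ρ] [IsFiniteMeasure ν]
    (hle : ν ≤ ρ) : ν.prod ν ≤ ρ.prod ρ := by
  rw [Measure.le_iff]
  intro s hs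
  rw [Measure.prod_apply hs, Measure.prod_apply hs]
  exact lintegral_mono' hle fun x => Measure.le_iff'.mp hle _


/-- **Monotonicity of the Fejér-weighted `L²` norm of the Fourier transform** under
restriction of measures: if `ν ≤ ρ` are finite positive measures on `ℝ`, then for every
`S > 0`, `∫_{−S}^{S} (1 − |s|/S)|ν̂(s)|² ds ≤ ∫_{−S}^{S} (1 − |s|/S)|ρ̂(s)|² ds`. -/
theorem fejer_weighted_monotone
    (ρ ν : Measure ℝ) [IsFiniteMeasure ρ] [IsFiniteMeasure ν]
    (hle : ν ≤ ρ) (S : ℝ) (hS : 0 < S) :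
    ∫ s in Icc (-S) S,
        (1 - |s| / S) * ‖∫ ξ, Complex.exp (Complex.I * s * ξ) ∂ν‖ ^ 2 ≤
      ∫ s in Icc (-S) S,
        (1 - |s| / S) * ‖∫ ξ, Complex.exp (Complex.I * s * ξ) ∂ρ‖ ^ 2 := by
  rw [fejer_identity ν hS, fejer_identity ρ hS]
  apply integral_mono_measure (prod_mono_aux ρ ν hle)
  · exact ae_of_all _ fun p => fejerK_nonneg hS _
  · apply Integrable.mono' (integrable_const (2 * S))
      (((fejerK_measurable hS).comp (measurable_fst.sub measurable_snd)).aestronglyMeasurable)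
    exact ae_of_all _ fun p => fejerK_bound hS _
end

section
/- For real numbers a₁, a₂, b₁, b₂ and parameters 0 < δ ≤ δ₀ and B > 0, define p(ξ) = (a₁ + a₂ ξ/δ) + (b₁ + b₂ ξ/δ) e^{iξ} for ξ ∈ [−B, B]. Then there exists a constant c(B, δ₀) > 0 such that max_{ξ ∈ [−B,B]} |p(ξ)| ≥ c(B, δ₀) · (|a₁| + |a₂| + |b₁| + |b₂|). -/
open Set Complex

private lemma avg_abs_le' {u v S z : ℝ} (hu : |u| ≤ S) (hv : |v| ≤ S) (h : u + v = 2 * z) :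
    |z| ≤ S := by
  have h2 : 2 * |z| ≤ |u| + |v| := by
    have h1 := abs_add_le u v
    rw [h, abs_mul] at h1
    have : |(2:ℝ)| = 2 := by norm_num
    rw [this] at h1
    linarith
  linarith

private lemma abs_le_of_add' {x y S : ℝ} (h : |x + y| ≤ S) : |x| ≤ S + |y| := by
  have h1 : |x + y + -y| ≤ |x + y| + |-y| := abs_add_le _ _
  simp only [add_neg_cancel_right, abs_neg] at h1
  linarith

set_option maxHeartbeats 1000000 in
/-- **Compactness lower bound for exponential sums of degree 4.** For `B > 0` and
`δ₀ > 0` there is `c = c(B, δ₀) > 0` such that for all real coefficients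
`a₁, a₂, b₁, b₂` and every `0 < δ ≤ δ₀`, the function
`p(ξ) = (a₁ + a₂ ξ/δ) + (b₁ + b₂ ξ/δ) e^{iξ}` satisfies
`max_{ξ ∈ [−B,B]} |p(ξ)| ≥ c (|a₁| + |a₂| + |b₁| + |b₂|)`. -/
theorem exp_sum_compactness_lower_bound (B δ₀ : ℝ) (hB : 0 < B) (hδ₀ : 0 < δ₀) :
    ∃ c : ℝ, 0 < c ∧
      ∀ (a₁ a₂ b₁ b₂ : ℝ) (δ : ℝ), 0 < δ → δ ≤ δ₀ →
        ∃ ξ ∈ Icc (-B) B,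
          c * (|a₁| + |a₂| + |b₁| + |b₂|) ≤
            ‖((a₁ + a₂ * ξ / δ : ℝ) : ℂ) +
              ((b₁ + b₂ * ξ / δ : ℝ) : ℂ) * Complex.exp (Complex.I * ξ)‖ := by
  have hπ : (1:ℝ) < Real.pi := by linarith [Real.pi_gt_three]
  set t := min B 1 with ht
  have ht0 : 0 < t := lt_min hB one_pos
  have ht1 : t ≤ 1 := min_le_right _ _
  have htB : t ≤ B := min_le_left _ _
  set s₀ := Real.sin t with hs₀def
  set c₀ := Real.cos t with hc₀def
  have hs : 0 < s₀ := Real.sin_pos_of_pos_of_lt_pi ht0 (lt_of_le_of_lt ht1 hπ)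
  have hc : |c₀| ≤ 1 := Real.abs_cos_le_one t
  set M := max 1 δ₀ with hM
  have hM1 : (1:ℝ) ≤ M := le_max_left _ _
  have hMδ : δ₀ ≤ M := le_max_right _ _
  have hM0 : 0 < M := lt_of_lt_of_le one_pos hM1
  set K := 1 + 2 / s₀ + 1 / t + 2 / (t * s₀) with hK
  have hK0 : 0 < K := by rw [hK]; positivity
  refine ⟨1 / (K * M), by positivity, ?_⟩
  intro a₁ a₂ b₁ b₂ δ hδ hδδ₀
  set p : ℝ → ℂ := fun ξ =>
    ((a₁ + a₂ * ξ / δ : ℝ) : ℂ) + ((b₁ + b₂ * ξ / δ : ℝ) : ℂ) * Complex.exp (Complex.I * ξ)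
    with hp
  have hre : ∀ ξ : ℝ, (p ξ).re = (a₁ + a₂ * ξ / δ) + (b₁ + b₂ * ξ / δ) * Real.cos ξ := by
    intro ξ
    rw [hp]
    simp only
    rw [mul_comm Complex.I (ξ:ℂ), Complex.exp_mul_I]
    simp [Complex.add_re, Complex.mul_re, Complex.cos_ofReal_re, Complex.sin_ofReal_re]
  have him : ∀ ξ : ℝ, (p ξ).im = (b₁ + b₂ * ξ / δ) * Real.sin ξ := by
    intro ξ
    rw [hp]
    simp only
    rw [mul_comm Complex.I (ξ:ℂ), Complex.exp_mul_I]
    simp [Complex.add_im, Complex.mul_im, Complex.cos_ofReal_im, Complex.sin_ofReal_re]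
  set S := max ‖p t‖ ‖p (-t)‖ with hSdef
  have hS0 : 0 ≤ S := le_trans (norm_nonneg _) (le_max_left _ _)
  have hpt : ‖p t‖ ≤ S := le_max_left _ _
  have hpt' : ‖p (-t)‖ ≤ S := le_max_right _ _
  -- imaginary part bounds
  have him1 : |(b₁ + b₂ * t / δ) * s₀| ≤ S := by
    have h := Complex.abs_im_le_norm (p t)
    rw [him t, ← hs₀def] at h
    exact h.trans hpt
  have him2 : |(b₁ - b₂ * t / δ) * s₀| ≤ S := by
    have h := Complex.abs_im_le_norm (p (-t))
    rw [him (-t), Real.sin_neg, ← hs₀def] at h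
    have e : (b₁ - b₂ * t / δ) * s₀ = -((b₁ + b₂ * (-t) / δ) * -s₀) := by ring
    rw [e, abs_neg]
    exact h.trans hpt'
  -- real part bounds
  have hre1 : |(a₁ + a₂ * t / δ) + (b₁ + b₂ * t / δ) * c₀| ≤ S := by
    have h := Complex.abs_re_le_norm (p t)
    rw [hre t, ← hc₀def] at h
    exact h.trans hpt
  have hre2 : |(a₁ + a₂ * (-t) / δ) + (b₁ + b₂ * (-t) / δ) * c₀| ≤ S := by
    have h := Complex.abs_re_le_norm (p (-t))
    rw [hre (-t), Real.cos_neg, ← hc₀def] at h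
    exact h.trans hpt'
  -- extract the coefficient bounds
  have hb₁s : |b₁ * s₀| ≤ S :=
    avg_abs_le' him1 him2 (by ring)
  have him2n : |-((b₁ - b₂ * t / δ) * s₀)| ≤ S := by rwa [abs_neg]
  have hxs : |(b₂ * t / δ) * s₀| ≤ S :=
    avg_abs_le' him1 him2n (by ring)
  have hac : |a₁ + b₁ * c₀| ≤ S :=
    avg_abs_le' hre1 hre2 (by ring)
  have hre2n : |-((a₁ + a₂ * (-t) / δ) + (b₁ + b₂ * (-t) / δ) * c₀)| ≤ S := by rwa [abs_neg]
  have hyc : |a₂ * t / δ + (b₂ * t / δ) * c₀| ≤ S :=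
    avg_abs_le' hre1 hre2n (by ring)
  -- clean forms
  have F1 : |b₁| * s₀ ≤ S := by
    rwa [abs_mul, abs_of_pos hs] at hb₁s
  have e3 : |b₂ * t / δ| = |b₂| * t / δ := by
    rw [abs_div, abs_mul, abs_of_pos ht0, abs_of_pos hδ]
  have e2 : |a₂ * t / δ| = |a₂| * t / δ := by
    rw [abs_div, abs_mul, abs_of_pos ht0, abs_of_pos hδ]
  have F2 : |b₂| * (t * s₀) ≤ S * δ := by
    rw [abs_mul, e3, abs_of_pos hs] at hxs
    have h := mul_le_mul_of_nonneg_right hxs hδ.le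
    have l : |b₂| * t / δ * s₀ * δ = |b₂| * (t * s₀) := by field_simp
    linarith [l ▸ h]
  have F3 : |a₁| ≤ S + |b₁| := by
    have h := abs_le_of_add' hac
    have h2 : |b₁ * c₀| ≤ |b₁| := by
      rw [abs_mul]
      calc |b₁| * |c₀| ≤ |b₁| * 1 := mul_le_mul_of_nonneg_left hc (abs_nonneg _)
      _ = |b₁| := mul_one _
    linarith
  have F4 : |a₂| * (t * s₀) ≤ δ * S * s₀ + |b₂| * (t * s₀) := by
    have h := abs_le_of_add' hyc
    have h2 : |(b₂ * t / δ) * c₀| ≤ |b₂| * t / δ := by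
      rw [abs_mul, e3]
      calc |b₂| * t / δ * |c₀| ≤ |b₂| * t / δ * 1 := by
            apply mul_le_mul_of_nonneg_left hc
            positivity
      _ = |b₂| * t / δ := mul_one _
    rw [e2] at h
    have h3 : |a₂| * t / δ ≤ S + |b₂| * t / δ := by linarith
    have h4 := mul_le_mul_of_nonneg_right h3 (mul_pos hδ hs).le
    have l : |a₂| * t / δ * (δ * s₀) = |a₂| * (t * s₀) := by field_simp
    have r : (S + |b₂| * t / δ) * (δ * s₀) = δ * S * s₀ + |b₂| * (t * s₀) := by
      field_simp
    rw [l, r] at h4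
    exact h4
  -- combine
  have hδM : δ * S ≤ M * S := mul_le_mul_of_nonneg_right (hδδ₀.trans hMδ) hS0
  have hSM : S ≤ M * S := le_mul_of_one_le_left hS0 hM1
  have hRHS : K * M * S * (t * s₀) = M * S * (t * s₀) + 2 * M * S * t + M * S * s₀ + 2 * M * S := by
    rw [hK]
    field_simp
  have key : (|a₁| + |a₂| + |b₁| + |b₂|) * (t * s₀) ≤ K * M * S * (t * s₀) := by
    rw [hRHS]
    linarith [mul_le_mul_of_nonneg_right F3 (mul_pos ht0 hs).le,
      mul_le_mul_of_nonneg_left F1 ht0.le, F4, F2,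
      mul_le_mul_of_nonneg_right hSM (mul_pos ht0 hs).le,
      mul_le_mul_of_nonneg_right hSM ht0.le,
      mul_le_mul_of_nonneg_right hδM hs.le, hδM, hS0, hs.le, ht0.le]
  have main : |a₁| + |a₂| + |b₁| + |b₂| ≤ K * M * S :=
    le_of_mul_le_mul_right key (mul_pos ht0 hs)
  have final : ∀ ξ : ℝ, S ≤ ‖p ξ‖ →
      1 / (K * M) * (|a₁| + |a₂| + |b₁| + |b₂|) ≤ ‖p ξ‖ := by
    intro ξ hξ
    rw [div_mul_eq_mul_div, div_le_iff₀ (by positivity)]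
    calc 1 * (|a₁| + |a₂| + |b₁| + |b₂|) = |a₁| + |a₂| + |b₁| + |b₂| := one_mul _
    _ ≤ K * M * S := main
    _ ≤ K * M * ‖p ξ‖ := mul_le_mul_of_nonneg_left hξ (by positivity)
    _ = ‖p ξ‖ * (K * M) := by ring
  rcases le_total ‖p (-t)‖ ‖p t‖ with hmax | hmax
  · refine ⟨t, ⟨by linarith, htB⟩, ?_⟩
    have h := final t (le_of_eq (max_eq_left hmax))
    rw [hp] at h
    exact h
  · refine ⟨-t, ⟨by linarith, by linarith⟩, ?_⟩
    have h := final (-t) (le_of_eq (max_eq_right hmax))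
    rw [hp] at h
    exact h
end
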